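/- arXiv:2002.08797 — 8 statements merged into one kernel-verified Lean document; each statement's English description precedes it below -/
import Mathlib

section
/- The ReLU correlation function f(c) = (1/π)(c·arcsin(c) + √(1−c²)) + c/2 satisfies f(c) ≥ c for all c ∈ [0,1]. -/
open Real Set

noncomputable def reluCorr (c : ℝ) : ℝ :=
  (1 / π) * (c * Real.arcsin c + Real.sqrt (1 - c ^ 2)) + c / 2

lemma mul_cos_le_sin {θ : ℝ} (h0 : 0 ≤ θ) (h1 : θ ≤ π / 2) : θ * Real.cos θ ≤ Real.sin θ := by
  rcases eq_or_lt_of_le h0 with h | h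
  · simp [← h]
  rcases eq_or_lt_of_le h1 with h' | h'
  · simp [h']
  · have hc : 0 < Real.cos θ := Real.cos_pos_of_mem_Ioo ⟨by linarith [Real.pi_pos], h'⟩
    have h2 := Real.lt_tan h h'
    rw [Real.tan_eq_sin_div_cos] at h2
    have := (lt_div_iff₀ hc).mp h2
    linarith

theorem reluCorr_ge_self : ∀ c ∈ Set.Icc (0 : ℝ) 1, c ≤ reluCorr c := by
  intro c hc
  obtain ⟨h0, h1⟩ := hc
  have hpi := Real.pi_pos
  set θ := Real.arccos c with hθ
  have hθ0 : 0 ≤ θ := Real.arccos_nonneg c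
  have hθ1 : θ ≤ π / 2 := by
    rw [hθ]
    exact Real.arccos_le_pi_div_two.mpr h0
  have hcos : Real.cos θ = c := Real.cos_arccos (by linarith) h1
  have hsin : Real.sin θ = Real.sqrt (1 - c ^ 2) := Real.sin_arccos c
  have harcsin : Real.arcsin c = π / 2 - θ := Real.arcsin_eq_pi_div_two_sub_arccos c
  have key : θ * c ≤ Real.sqrt (1 - c ^ 2) := by
    rw [← hsin, ← hcos]
    exact mul_cos_le_sin hθ0 hθ1
  have : π / 2 * c ≤ c * Real.arcsin c + Real.sqrt (1 - c ^ 2) := by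
    rw [harcsin]; nlinarith
  unfold reluCorr
  rw [div_mul_eq_mul_div, one_mul]
  have h3 : (π / 2 * c) / π ≤ (c * Real.arcsin c + Real.sqrt (1 - c ^ 2)) / π :=
    (div_le_div_iff_of_pos_right hpi).mpr this
  have h4 : (π / 2 * c) / π = c / 2 := by field_simp
  linarith
end

section
/- The ReLU correlation function f(c) = (1/π)(c·arcsin(c) + √(1−c²)) + c/2 is convex on [−1,1]. -/
open Real Set

lemma reluCorr_hasDerivAt {x : ℝ} (hx : x ∈ Set.Ioo (-1 : ℝ) 1) :
    HasDerivAt reluCorr ((1 / π) * Real.arcsin x + 1 / 2) x := by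
  obtain ⟨hx1, hx2⟩ := hx
  have hx1' : x ≠ -1 := ne_of_gt hx1
  have hx2' : x ≠ 1 := ne_of_lt hx2
  have hs : (0:ℝ) < 1 - x ^ 2 := by nlinarith
  have hsq : Real.sqrt (1 - x ^ 2) > 0 := Real.sqrt_pos.mpr hs
  have h1 := Real.hasDerivAt_arcsin hx1' hx2'
  have h2 : HasDerivAt (fun c : ℝ => c * Real.arcsin c)
      (1 * Real.arcsin x + x * (1 / Real.sqrt (1 - x ^ 2))) x :=
    (hasDerivAt_id x).mul h1
  have h3 : HasDerivAt (fun c : ℝ => 1 - c ^ 2) (-(2 * x)) x := by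
    have := (hasDerivAt_pow 2 x).const_sub 1
    simpa using this
  have h4 : HasDerivAt (fun c : ℝ => Real.sqrt (1 - c ^ 2))
      (-(2 * x) / (2 * Real.sqrt (1 - x ^ 2))) x :=
    h3.sqrt (ne_of_gt hs)
  have h5 := ((h2.add h4).const_mul (1 / π)).add
    ((hasDerivAt_id x).div_const 2)
  have heq : (1 / π) * ((1 * Real.arcsin x + x * (1 / Real.sqrt (1 - x ^ 2))) +
      -(2 * x) / (2 * Real.sqrt (1 - x ^ 2))) + 1 / 2
      = (1 / π) * Real.arcsin x + 1 / 2 := by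
    have hπ : π ≠ 0 := Real.pi_ne_zero
    field_simp
    ring
  rw [heq] at h5
  exact h5

theorem reluCorr_convexOn : ConvexOn ℝ (Set.Icc (-1 : ℝ) 1) reluCorr := by
  have hI : interior (Set.Icc (-1 : ℝ) 1) = Set.Ioo (-1 : ℝ) 1 := interior_Icc
  apply MonotoneOn.convexOn_of_deriv (convex_Icc _ _)
  · -- continuity
    apply ContinuousOn.add
    · apply ContinuousOn.mul continuousOn_const
      exact ((continuousOn_id.mul Real.continuous_arcsin.continuousOn).add
        ((continuous_const.sub (continuous_pow 2)).continuousOn.sqrt))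
    · exact (continuous_id.div_const 2).continuousOn
  · rw [hI]
    intro x hx
    exact ⟨_, (reluCorr_hasDerivAt hx).hasDerivWithinAt⟩
  · rw [hI]
    intro a ha b hb hab
    rw [(reluCorr_hasDerivAt ha).deriv, (reluCorr_hasDerivAt hb).deriv]
    have : Real.arcsin a ≤ Real.arcsin b := Real.monotone_arcsin hab
    have hπ : (0:ℝ) < 1 / π := by positivity
    nlinarith
end

section
/- For the ReLU correlation function f(c) = (1/π)(c·arcsin(c) + √(1−c²)) + c/2, one has the asymptotic expansion f(x) = x + (2√2/(3π))(1−x)^{3/2} + O((1−x)^{5/2}) as x → 1⁻; in particular, (f(x) − x)/(1−x)^{3/2} tends to 2√2/(3π) as x → 1⁻. -/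
open Real Set Filter Topology

lemma hasDerivAt_g {x : ℝ} (h1 : -1 < x) (h2 : x < 1) :
    HasDerivAt (fun u => reluCorr u - u) (Real.arcsin x / π - 1 / 2) x := by
  have hne1 : x ≠ -1 := ne_of_gt h1
  have hne2 : x ≠ 1 := ne_of_lt h2
  have hx2 : (0:ℝ) < 1 - x ^ 2 := by nlinarith
  have hs : Real.sqrt (1 - x ^ 2) ≠ 0 := by positivity
  have ha : HasDerivAt Real.arcsin (1 / Real.sqrt (1 - x ^ 2)) x :=
    Real.hasDerivAt_arcsin hne1 hne2
  have hmul : HasDerivAt (fun u => u * Real.arcsin u)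
      (1 * Real.arcsin x + x * (1 / Real.sqrt (1 - x ^ 2))) x :=
    (hasDerivAt_id x).mul ha
  have hin : HasDerivAt (fun u : ℝ => 1 - u ^ 2) (-(2 * x)) x := by
    simpa using ((hasDerivAt_pow 2 x).const_sub 1)
  have hsq : HasDerivAt (fun u : ℝ => Real.sqrt (1 - u ^ 2))
      (-(2 * x) / (2 * Real.sqrt (1 - x ^ 2))) x := hin.sqrt (by positivity)
  have : HasDerivAt (fun u => reluCorr u - u)
      ((1 / π) * ((1 * Real.arcsin x + x * (1 / Real.sqrt (1 - x ^ 2))) +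
        (-(2 * x) / (2 * Real.sqrt (1 - x ^ 2)))) + 1 / 2 - 1) x := by
    unfold reluCorr
    exact (((hmul.add hsq).const_mul (1 / π)).add ((hasDerivAt_id x).div_const 2)).sub
      (hasDerivAt_id x)
  convert this using 1
  have hpi : π ≠ 0 := Real.pi_ne_zero
  field_simp
  ring

lemma continuous_g : Continuous (fun u : ℝ => reluCorr u - u) := by
  unfold reluCorr
  exact ((continuous_const.mul ((continuous_id.mul Real.continuous_arcsin).add
    (Real.continuous_sqrt.comp (continuous_const.sub (continuous_pow 2))))).add
    (continuous_id.div_const 2)).sub continuous_id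

lemma g_eq_integral {x : ℝ} (h0 : 0 ≤ x) (h1 : x ≤ 1) :
    reluCorr x - x = ∫ u in x..1, Real.arccos u / π := by
  have key : (∫ u in x..1, (Real.arcsin u / π - 1 / 2)) =
      (reluCorr 1 - 1) - (reluCorr x - x) := by
    apply intervalIntegral.integral_eq_sub_of_hasDeriv_right_of_le h1
      (continuous_g.continuousOn)
    · intro u hu
      exact (hasDerivAt_g (by linarith [hu.1]) hu.2).hasDerivWithinAt
    · exact ((Real.continuous_arcsin.div_const π).sub continuous_const).intervalIntegrable x 1
  have hg1 : reluCorr 1 - 1 = 0 := by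
    unfold reluCorr
    rw [Real.arcsin_one]
    have hpi : π ≠ 0 := Real.pi_ne_zero
    norm_num
    field_simp
    norm_num
  rw [hg1, zero_sub] at key
  have : (∫ u in x..1, Real.arccos u / π) = ∫ u in x..1, -(Real.arcsin u / π - 1 / 2) := by
    apply intervalIntegral.integral_congr
    intro u _
    simp only
    rw [Real.arccos_eq_pi_div_two_sub_arcsin]
    have hpi : π ≠ 0 := Real.pi_ne_zero
    field_simp
    ring
  rw [this, intervalIntegral.integral_neg, key, neg_neg]

lemma deriv_ineq {t : ℝ} (h0 : 0 ≤ t) (h1 : t ≤ 3/4) :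
    1 / Real.sqrt (1 - t ^ 2) ≤ 1 + 3 * t ^ 2 := by
  have hpos : (0:ℝ) < 1 - t ^ 2 := by nlinarith
  have hs : 0 < Real.sqrt (1 - t ^ 2) := Real.sqrt_pos.2 hpos
  rw [div_le_iff₀ hs]
  have hsq : Real.sqrt (1 - t ^ 2) ^ 2 = 1 - t ^ 2 := Real.sq_sqrt hpos.le
  have ha : 0 < (1 + 3 * t ^ 2) * Real.sqrt (1 - t ^ 2) := by positivity
  have ha2 : 1 ≤ ((1 + 3 * t ^ 2) * Real.sqrt (1 - t ^ 2)) ^ 2 := by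
    rw [mul_pow, hsq]
    have h2 : t ^ 2 ≤ 9/16 := by nlinarith
    have h4 : t ^ 4 ≤ (9/16) * t ^ 2 := by nlinarith [sq_nonneg t]
    have h6 : t ^ 6 ≤ (9/16) * t ^ 4 := by nlinarith [pow_nonneg h0 4]
    nlinarith [h2, h4, h6, sq_nonneg t]
  nlinarith [ha, ha2]

lemma arcsin_le_add_cube {y : ℝ} (h0 : 0 ≤ y) (h1 : y ≤ 3/4) :
    Real.arcsin y ≤ y + y ^ 3 := by
  have hint : ∀ t ∈ Set.Icc (0:ℝ) y, (0:ℝ) ≤ 1 + 3 * t ^ 2 - 1 / Real.sqrt (1 - t ^ 2) := by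
    intro t ht
    have := deriv_ineq ht.1 (le_trans ht.2 h1)
    linarith
  have hcontOn : ContinuousOn (fun t : ℝ => 1 + 3 * t ^ 2 - 1 / Real.sqrt (1 - t ^ 2))
      (Set.Icc 0 y) := by
    apply ContinuousOn.sub (by fun_prop)
    apply ContinuousOn.div continuousOn_const
    · fun_prop
    · intro t ht
      have h1' : t ≤ 3/4 := le_trans ht.2 h1
      have : (0:ℝ) < 1 - t ^ 2 := by nlinarith [ht.1]
      positivity
  have hkey : (∫ t in (0:ℝ)..y, (1 + 3 * t ^ 2 - 1 / Real.sqrt (1 - t ^ 2))) =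
      (y + y ^ 3 - Real.arcsin y) - (0 + 0 ^ 3 - Real.arcsin 0) := by
    apply intervalIntegral.integral_eq_sub_of_hasDeriv_right_of_le h0
    · exact ((continuous_id.add (continuous_pow 3)).continuousOn).sub
        Real.continuous_arcsin.continuousOn
    · intro t ht
      have ht1 : t < 1 := lt_of_lt_of_le ht.2 (by linarith)
      have ht0 : -1 < t := by linarith [ht.1]
      have hd : HasDerivAt (fun t : ℝ => t + t ^ 3 - Real.arcsin t)
          (1 + 3 * t ^ 2 - 1 / Real.sqrt (1 - t ^ 2)) t := by
        have := ((hasDerivAt_id t).add (hasDerivAt_pow 3 t)).sub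
          (Real.hasDerivAt_arcsin (ne_of_gt ht0) (ne_of_lt ht1))
        exact this.congr_deriv (by norm_num)
      exact hd.hasDerivWithinAt
    · rw [intervalIntegrable_iff_integrableOn_Icc_of_le h0]
      exact hcontOn.integrableOn_compact isCompact_Icc
  have hnn : (0:ℝ) ≤ ∫ t in (0:ℝ)..y, (1 + 3 * t ^ 2 - 1 / Real.sqrt (1 - t ^ 2)) :=
    intervalIntegral.integral_nonneg h0 hint
  rw [hkey] at hnn
  simp [Real.arcsin_zero] at hnn
  linarith

lemma le_arcsin {y : ℝ} (h0 : 0 ≤ y) (h1 : y ≤ 1) : y ≤ Real.arcsin y := by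
  have := Real.sin_le (Real.arcsin_nonneg.2 h0)
  rwa [Real.sin_arcsin (by linarith) h1] at this

lemma arccos_eq_two_arcsin {u : ℝ} (h0 : 0 ≤ u) (h1 : u ≤ 1) :
    Real.arccos u = 2 * Real.arcsin (Real.sqrt ((1 - u) / 2)) := by
  set y := Real.sqrt ((1 - u) / 2) with hy
  have hynn : 0 ≤ y := Real.sqrt_nonneg _
  have hy2 : y ^ 2 = (1 - u) / 2 := Real.sq_sqrt (by linarith)
  have hy1 : y ≤ 1 := by nlinarith
  have hθnn : 0 ≤ Real.arcsin y := Real.arcsin_nonneg.2 hynn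
  have hθle : Real.arcsin y ≤ π / 2 := Real.arcsin_le_pi_div_two y
  have hcos : Real.cos (2 * Real.arcsin y) = u := by
    rw [Real.cos_two_mul]
    have hsin : Real.sin (Real.arcsin y) = y := Real.sin_arcsin (by linarith) hy1
    have := Real.sin_sq_add_cos_sq (Real.arcsin y)
    nlinarith [this, hsin]
  rw [← hcos, Real.arccos_cos (by linarith) (by linarith)]

lemma arccos_bounds {u : ℝ} (h0 : 0 ≤ u) (h1 : u ≤ 1) :
    Real.sqrt 2 * Real.sqrt (1 - u) ≤ Real.arccos u ∧
    Real.arccos u ≤ Real.sqrt 2 * Real.sqrt (1 - u) + (1 - u) * Real.sqrt (1 - u) := by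
  set y := Real.sqrt ((1 - u) / 2) with hy
  have hynn : 0 ≤ y := Real.sqrt_nonneg _
  have hy2 : y ^ 2 = (1 - u) / 2 := Real.sq_sqrt (by linarith)
  have hy34 : y ≤ 3/4 := by nlinarith
  have hid : Real.arccos u = 2 * Real.arcsin y := arccos_eq_two_arcsin h0 h1
  have hsqrt4 : Real.sqrt 4 = 2 := by
    rw [show (4:ℝ) = 2 ^ 2 by norm_num]
    exact Real.sqrt_sq (by norm_num)
  have h2y : 2 * y = Real.sqrt 2 * Real.sqrt (1 - u) := by
    rw [hy, ← Real.sqrt_mul (by norm_num : (0:ℝ) ≤ 2) (1 - u),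
      show (2:ℝ) * (1 - u) = 4 * ((1 - u) / 2) by ring,
      Real.sqrt_mul (by norm_num : (0:ℝ) ≤ 4) ((1 - u) / 2), hsqrt4]
  have hycube : 2 * y ^ 3 ≤ (1 - u) * Real.sqrt (1 - u) := by
    have hyle : y ≤ Real.sqrt (1 - u) := Real.sqrt_le_sqrt (by linarith)
    have : 2 * y ^ 3 = (1 - u) * y := by nlinarith
    rw [this]
    exact mul_le_mul_of_nonneg_left hyle (by linarith)
  constructor
  · rw [hid, ← h2y]
    have := le_arcsin hynn (by nlinarith)
    linarith
  · rw [hid]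
    have := arcsin_le_add_cube hynn hy34
    calc 2 * Real.arcsin y ≤ 2 * (y + y ^ 3) := by linarith
    _ = 2 * y + 2 * y ^ 3 := by ring
    _ ≤ Real.sqrt 2 * Real.sqrt (1 - u) + (1 - u) * Real.sqrt (1 - u) := by
        rw [← h2y]; linarith

lemma rpow_three_halves {t : ℝ} (ht : 0 ≤ t) : t ^ ((3:ℝ)/2) = t * Real.sqrt t := by
  rw [show (3:ℝ)/2 = 1 + 1/2 by norm_num, Real.rpow_add' ht (by norm_num), Real.rpow_one,
    ← Real.sqrt_eq_rpow]

lemma rpow_five_halves {t : ℝ} (ht : 0 ≤ t) : t ^ ((5:ℝ)/2) = t ^ 2 * Real.sqrt t := by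
  rw [show (5:ℝ)/2 = 2 + 1/2 by norm_num, Real.rpow_add' ht (by norm_num),
    ← Real.sqrt_eq_rpow, show (2:ℝ) = ((2:ℕ):ℝ) by norm_num, Real.rpow_natCast]

lemma integral_sqrt0 {b : ℝ} (hb : 0 ≤ b) :
    (∫ t in (0:ℝ)..b, Real.sqrt t) = 2/3 * (b * Real.sqrt b) := by
  have h1 : (∫ t in (0:ℝ)..b, Real.sqrt t) = ∫ t in (0:ℝ)..b, t ^ ((1:ℝ)/2) := by
    apply intervalIntegral.integral_congr
    intro t _
    exact Real.sqrt_eq_rpow t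
  rw [h1, integral_rpow (Or.inl (by norm_num))]
  rw [show (1:ℝ)/2 + 1 = (3:ℝ)/2 by norm_num, Real.zero_rpow (by norm_num),
    rpow_three_halves hb]
  ring

lemma integral_sqrt_one_sub {x : ℝ} (hx : x ≤ 1) :
    (∫ u in x..1, Real.sqrt (1 - u)) = 2/3 * ((1 - x) * Real.sqrt (1 - x)) := by
  have := intervalIntegral.integral_comp_sub_left (a := x) (b := 1) Real.sqrt 1
  simp only [sub_self] at this
  rw [this, integral_sqrt0 (by linarith)]

lemma main_est {x : ℝ} (h0 : 0 ≤ x) (h1 : x ≤ 1) :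
    0 ≤ reluCorr x - x - (2 * Real.sqrt 2 / (3 * π)) * (1 - x) ^ ((3:ℝ)/2) ∧
    reluCorr x - x - (2 * Real.sqrt 2 / (3 * π)) * (1 - x) ^ ((3:ℝ)/2) ≤
      (1 - x) ^ ((5:ℝ)/2) := by
  have hπ : 0 < π := Real.pi_pos
  have hπ1 : 1 ≤ π := by linarith [Real.pi_gt_three]
  have hint1 : IntervalIntegrable (fun u => Real.arccos u / π) MeasureTheory.volume x 1 :=
    (Real.continuous_arccos.div_const π).intervalIntegrable x 1
  have hcont2 : Continuous (fun u : ℝ => Real.sqrt 2 * Real.sqrt (1 - u) / π) := by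
    fun_prop
  have hint2 : IntervalIntegrable (fun u => Real.sqrt 2 * Real.sqrt (1 - u) / π) MeasureTheory.volume x 1 :=
    hcont2.intervalIntegrable x 1
  have hrepr : reluCorr x - x = ∫ u in x..1, Real.arccos u / π := g_eq_integral h0 h1
  have hmain : (2 * Real.sqrt 2 / (3 * π)) * (1 - x) ^ ((3:ℝ)/2) =
      ∫ u in x..1, Real.sqrt 2 * Real.sqrt (1 - u) / π := by
    have e1 : (∫ u in x..1, Real.sqrt 2 * Real.sqrt (1 - u) / π) =
        (∫ u in x..1, Real.sqrt (1 - u)) * Real.sqrt 2 / π := by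
      rw [show (fun u => Real.sqrt 2 * Real.sqrt (1 - u) / π) =
          (fun u => Real.sqrt (1 - u) * (Real.sqrt 2 / π)) by funext u; ring]
      rw [intervalIntegral.integral_mul_const]
      ring
    rw [e1, integral_sqrt_one_sub h1, rpow_three_halves (by linarith)]
    field_simp
  have hdiff : reluCorr x - x - (2 * Real.sqrt 2 / (3 * π)) * (1 - x) ^ ((3:ℝ)/2) =
      ∫ u in x..1, (Real.arccos u / π - Real.sqrt 2 * Real.sqrt (1 - u) / π) := by
    rw [hrepr, hmain, intervalIntegral.integral_sub hint1 hint2]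
  rw [hdiff]
  constructor
  · apply intervalIntegral.integral_nonneg h1
    intro u hu
    have hb := (arccos_bounds (by linarith [hu.1]) hu.2).1
    rw [← sub_div]
    apply div_nonneg (by linarith) hπ.le
  · have hup : (∫ u in x..1, (Real.arccos u / π - Real.sqrt 2 * Real.sqrt (1 - u) / π)) ≤
        ∫ u in x..1, ((1 - x) * Real.sqrt (1 - x) / π) := by
      apply intervalIntegral.integral_mono_on h1 (hint1.sub hint2)
        (continuous_const.intervalIntegrable x 1)
      intro u hu
      have hb := (arccos_bounds (by linarith [hu.1]) hu.2).2
      have hmono : (1 - u) * Real.sqrt (1 - u) ≤ (1 - x) * Real.sqrt (1 - x) := by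
        apply mul_le_mul (by linarith [hu.1]) (Real.sqrt_le_sqrt (by linarith [hu.1]))
          (Real.sqrt_nonneg _) (by linarith [hu.1])
      rw [← sub_div]
      gcongr
      linarith
    rw [intervalIntegral.integral_const, smul_eq_mul] at hup
    have hfinal : (1 - x) * ((1 - x) * Real.sqrt (1 - x) / π) ≤ (1 - x) ^ ((5:ℝ)/2) := by
      rw [rpow_five_halves (by linarith)]
      rw [div_eq_mul_inv]
      have h2 : (1 - x) * ((1 - x) * Real.sqrt (1 - x) * π⁻¹) =
          ((1 - x) ^ 2 * Real.sqrt (1 - x)) * π⁻¹ := by ring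
      rw [h2]
      have hnn : 0 ≤ (1 - x) ^ 2 * Real.sqrt (1 - x) := by positivity
      calc ((1 - x) ^ 2 * Real.sqrt (1 - x)) * π⁻¹ ≤
          ((1 - x) ^ 2 * Real.sqrt (1 - x)) * 1 := by
            apply mul_le_mul_of_nonneg_left ?_ hnn
            rw [inv_le_one_iff₀]
            right; exact hπ1
        _ = (1 - x) ^ 2 * Real.sqrt (1 - x) := by ring
    linarith

/-- Asymptotic expansion `f(x) = x + (2√2/(3π))(1−x)^{3/2} + O((1−x)^{5/2})` as `x → 1⁻`,
and in particular `(f(x) − x)/(1−x)^{3/2} → 2√2/(3π)`. -/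
theorem reluCorr_expansion_near_one :
    (∃ C > (0 : ℝ), ∀ᶠ x in 𝓝[<] (1 : ℝ),
        |reluCorr x - x - (2 * Real.sqrt 2 / (3 * π)) * (1 - x) ^ ((3 : ℝ) / 2)| ≤
          C * (1 - x) ^ ((5 : ℝ) / 2)) ∧
    Tendsto (fun x : ℝ => (reluCorr x - x) / (1 - x) ^ ((3 : ℝ) / 2)) (𝓝[<] (1 : ℝ))
      (𝓝 (2 * Real.sqrt 2 / (3 * π))) := by
  have hmem : Ioo (0:ℝ) 1 ∈ 𝓝[<] (1:ℝ) :=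
    Ioo_mem_nhdsLT_of_mem ⟨zero_lt_one, le_refl 1⟩
  constructor
  · refine ⟨1, one_pos, ?_⟩
    filter_upwards [hmem] with x hx
    obtain ⟨hl, hu⟩ := main_est hx.1.le hx.2.le
    rw [abs_of_nonneg hl, one_mul]
    exact hu
  · set a := 2 * Real.sqrt 2 / (3 * π) with ha
    have hlow : ∀ᶠ x in 𝓝[<] (1:ℝ), a ≤ (reluCorr x - x) / (1 - x) ^ ((3:ℝ)/2) := by
      filter_upwards [hmem] with x hx
      obtain ⟨hl, _⟩ := main_est hx.1.le hx.2.le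
      have htp : (0:ℝ) < (1 - x) ^ ((3:ℝ)/2) :=
        Real.rpow_pos_of_pos (by linarith [hx.2]) _
      rw [le_div_iff₀ htp]
      linarith
    have hhigh : ∀ᶠ x in 𝓝[<] (1:ℝ),
        (reluCorr x - x) / (1 - x) ^ ((3:ℝ)/2) ≤ a + (1 - x) := by
      filter_upwards [hmem] with x hx
      obtain ⟨_, hu⟩ := main_est hx.1.le hx.2.le
      have ht0 : (0:ℝ) < 1 - x := by linarith [hx.2]
      have htp : (0:ℝ) < (1 - x) ^ ((3:ℝ)/2) := Real.rpow_pos_of_pos ht0 _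
      rw [div_le_iff₀ htp]
      have h52 : (1 - x) ^ ((5:ℝ)/2) = (1 - x) * (1 - x) ^ ((3:ℝ)/2) := by
        rw [rpow_five_halves ht0.le, rpow_three_halves ht0.le]
        ring
      rw [h52] at hu
      nlinarith [hu]
    have hh : Tendsto (fun x : ℝ => a + (1 - x)) (𝓝[<] (1:ℝ)) (𝓝 a) := by
      have : Tendsto (fun x : ℝ => a + (1 - x)) (𝓝 (1:ℝ)) (𝓝 (a + (1 - 1))) := by
        exact (continuous_const.add (continuous_const.sub continuous_id)).tendsto 1
      simpa using this.mono_left nhdsWithin_le_nhds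
    exact tendsto_of_tendsto_of_tendsto_of_le_of_le' tendsto_const_nhds hh hlow hhigh
end

section
/- For Z₁, Z₂ independent standard Gaussian random variables and c ∈ [−1,1], the expectation E[ReLU(Z₁)·ReLU(cZ₁ + √(1−c²)Z₂)] equals (1/(2π))(c·arcsin(c) + √(1−c²)) + c/4. -/
open Real Set MeasureTheory ProbabilityTheory intervalIntegral
open scoped ENNReal NNReal

lemma prod_gaussian :
    (gaussianReal 0 1).prod (gaussianReal 0 1)
      = (volume : Measure (ℝ × ℝ)).withDensity
          (fun p => ENNReal.ofReal (gaussianPDFReal 0 1 p.1 * gaussianPDFReal 0 1 p.2)) := by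
  have hG : gaussianReal 0 1 = volume.withDensity (gaussianPDF 0 1) :=
    gaussianReal_of_var_ne_zero 0 one_ne_zero
  have hd : Measurable (fun p : ℝ × ℝ =>
      ENNReal.ofReal (gaussianPDFReal 0 1 p.1 * gaussianPDFReal 0 1 p.2)) := by
    exact (((measurable_gaussianPDFReal 0 1).comp measurable_fst).mul
      ((measurable_gaussianPDFReal 0 1).comp measurable_snd)).ennreal_ofReal
  refine Measure.prod_eq fun s t hs ht => ?_
  rw [withDensity_apply _ (hs.prod ht)]
  have : (volume : Measure (ℝ × ℝ)).restrict (s ×ˢ t)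
      = (volume.restrict s).prod (volume.restrict t) := by
    rw [Measure.volume_eq_prod, Measure.prod_restrict]
  rw [this]
  have hsplit : ∀ p : ℝ × ℝ, ENNReal.ofReal (gaussianPDFReal 0 1 p.1 * gaussianPDFReal 0 1 p.2)
      = gaussianPDF 0 1 p.1 * gaussianPDF 0 1 p.2 := by
    intro p
    rw [ENNReal.ofReal_mul (gaussianPDFReal_nonneg _ _ _)]
    rfl
  simp_rw [hsplit]
  rw [lintegral_prod_mul ((measurable_gaussianPDF 0 1).aemeasurable)
    ((measurable_gaussianPDF 0 1).aemeasurable)]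
  rw [hG, withDensity_apply _ hs, withDensity_apply _ ht]


lemma radial_int : ∫ r in Ioi (0:ℝ), r ^ 3 * Real.exp (-r ^ 2 / 2) = 2 := by
  have hint : IntegrableOn (fun r : ℝ => r ^ 3 * Real.exp (-r ^ 2 / 2)) (Ioi 0) := by
    have h := integrableOn_rpow_mul_exp_neg_mul_sq (b := (1/2 : ℝ)) (by norm_num) (s := 3) (by norm_num)
    refine (integrableOn_congr_fun (fun x hx => ?_) measurableSet_Ioi).mp h
    rw [show ((3:ℝ)) = ((3:ℕ):ℝ) by norm_num, Real.rpow_natCast]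
    ring_nf
  have hderiv : ∀ x ∈ Ici (0:ℝ), HasDerivAt (fun r : ℝ => -(r ^ 2 + 2) * Real.exp (-r ^ 2 / 2))
      (x ^ 3 * Real.exp (-x ^ 2 / 2)) x := by
    intro x _
    have h1 : HasDerivAt (fun r : ℝ => -(r ^ 2 + 2)) (-(2 * x)) x := by
      have := ((hasDerivAt_pow 2 x).add_const 2).neg
      exact this.congr_deriv (by norm_num)
    have h2 : HasDerivAt (fun r : ℝ => Real.exp (-r ^ 2 / 2)) (Real.exp (-x ^ 2 / 2) * (-(2*x)/2)) x := by
      have hx : HasDerivAt (fun r : ℝ => -r ^ 2 / 2) (-(2*x)/2) x := by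
        have := ((hasDerivAt_pow 2 x).neg).div_const 2
        simpa using this
      simpa using hx.exp
    have := h1.mul h2
    exact this.congr_deriv (by ring)
  have htend : Filter.Tendsto (fun r : ℝ => -(r ^ 2 + 2) * Real.exp (-r ^ 2 / 2))
      Filter.atTop (nhds 0) := by
    have h0 : Filter.Tendsto (fun u : ℝ => -(2*u + 2) * Real.exp (-u)) Filter.atTop (nhds 0) := by
      have h1 := tendsto_pow_mul_exp_neg_atTop_nhds_zero 1
      have h2 := tendsto_pow_mul_exp_neg_atTop_nhds_zero 0
      have := (h1.const_mul (-2)).add (h2.const_mul (-2))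
      simpa using this.congr (fun x => by simp [Real.exp_neg]; ring)
    have hu : Filter.Tendsto (fun r : ℝ => r ^ 2 / 2) Filter.atTop Filter.atTop := by
      exact (Filter.tendsto_pow_atTop (by norm_num)).atTop_div_const (by norm_num)
    have := h0.comp hu
    refine this.congr (fun r => ?_)
    simp only [Function.comp]
    rw [neg_div]
    ring_nf
  have := integral_Ioi_of_hasDerivAt_of_tendsto' hderiv hint htend
  rw [this]; norm_num


lemma pdf_prod (a b : ℝ) :
    gaussianPDFReal 0 1 a * gaussianPDFReal 0 1 b
      = (2 * π)⁻¹ * Real.exp (-(a ^ 2 + b ^ 2) / 2) := by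
  simp only [gaussianPDFReal, NNReal.coe_one, mul_one, sub_zero]
  rw [show ((√(2 * π))⁻¹ * rexp (-a ^ 2 / 2)) * ((√(2 * π))⁻¹ * rexp (-b ^ 2 / 2))
      = ((√(2 * π))⁻¹ * (√(2 * π))⁻¹) * (rexp (-a ^ 2 / 2) * rexp (-b ^ 2 / 2)) by ring,
    ← Real.exp_add, ← mul_inv, Real.mul_self_sqrt (by positivity),
    show -a ^ 2 / 2 + -b ^ 2 / 2 = -(a ^ 2 + b ^ 2) / 2 by ring]

lemma angular_int {β : ℝ} (hβ : β ∈ Icc (-(π/2)) (π/2)) :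
    ∫ θ in Ioo (-π) π, max (Real.cos θ) 0 * max (Real.sin (θ + β)) 0
      = Real.cos β / 2 + π * Real.sin β / 4 + β * Real.sin β / 2 := by
  obtain ⟨hβ1, hβ2⟩ := hβ
  have hπ := Real.pi_pos
  set h : ℝ → ℝ := fun θ => max (Real.cos θ) 0 * max (Real.sin (θ + β)) 0 with hh
  have hcont : Continuous h := by
    fun_prop
  have hIoo : ∫ θ in Ioo (-π) π, h θ = ∫ θ in (-π)..π, h θ := by
    rw [intervalIntegral.integral_of_le (by linarith), integral_Ioc_eq_integral_Ioo]
  rw [hIoo]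
  have hint : ∀ a b : ℝ, IntervalIntegrable h volume a b :=
    fun a b => hcont.intervalIntegrable a b
  have split1 : (∫ θ in (-π)..(-(π/2)), h θ) + ∫ θ in (-(π/2))..π, h θ = ∫ θ in (-π)..π, h θ :=
    integral_add_adjacent_intervals (hint _ _) (hint _ _)
  have split2 : (∫ θ in (-(π/2))..(-β), h θ) + ∫ θ in (-β)..π, h θ = ∫ θ in (-(π/2))..π, h θ :=
    integral_add_adjacent_intervals (hint _ _) (hint _ _)
  have split3 : (∫ θ in (-β)..(π/2), h θ) + ∫ θ in (π/2)..π, h θ = ∫ θ in (-β)..π, h θ :=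
    integral_add_adjacent_intervals (hint _ _) (hint _ _)
  have P1 : ∫ θ in (-π)..(-(π/2)), h θ = 0 := by
    rw [intervalIntegral.integral_congr (g := fun _ => (0:ℝ)) ?_, intervalIntegral.integral_const]
    · simp
    · intro θ hθ
      rw [uIcc_of_le (by linarith)] at hθ
      have hc : Real.cos θ ≤ 0 := by
        rw [← Real.cos_neg]
        exact Real.cos_nonpos_of_pi_div_two_le_of_le (by linarith [hθ.2]) (by linarith [hθ.1])
      simp [hh, max_eq_right hc]
  have P2 : ∫ θ in (-(π/2))..(-β), h θ = 0 := by
    rw [intervalIntegral.integral_congr (g := fun _ => (0:ℝ)) ?_, intervalIntegral.integral_const]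
    · simp
    · intro θ hθ
      rw [uIcc_of_le (by linarith)] at hθ
      have hs : Real.sin (θ + β) ≤ 0 :=
        Real.sin_nonpos_of_nonpos_of_neg_pi_le (by linarith [hθ.2]) (by linarith [hθ.1])
      simp [hh, max_eq_right hs]
  have P4 : ∫ θ in (π/2)..π, h θ = 0 := by
    rw [intervalIntegral.integral_congr (g := fun _ => (0:ℝ)) ?_, intervalIntegral.integral_const]
    · simp
    · intro θ hθ
      rw [uIcc_of_le (by linarith)] at hθ
      have hc : Real.cos θ ≤ 0 :=
        Real.cos_nonpos_of_pi_div_two_le_of_le hθ.1 (by linarith [hθ.2])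
      simp [hh, max_eq_right hc]
  have P3 : ∫ θ in (-β)..(π/2), h θ
      = Real.cos β / 2 + π * Real.sin β / 4 + β * Real.sin β / 2 := by
    have hcongr : ∫ θ in (-β)..(π/2), h θ
        = ∫ θ in (-β)..(π/2), Real.cos θ * Real.sin (θ + β) := by
      refine intervalIntegral.integral_congr ?_
      intro θ hθ
      rw [uIcc_of_le (by linarith)] at hθ
      have hc : 0 ≤ Real.cos θ :=
        Real.cos_nonneg_of_mem_Icc ⟨by linarith [hθ.1], hθ.2⟩
      have hs : 0 ≤ Real.sin (θ + β) :=
        Real.sin_nonneg_of_nonneg_of_le_pi (by linarith [hθ.1]) (by linarith [hθ.2])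
      simp [hh, max_eq_left hc, max_eq_left hs]
    rw [hcongr]
    set H : ℝ → ℝ := fun θ => -Real.cos (2*θ+β)/4 + θ * (Real.sin β / 2) with hH
    have hftc : ∫ θ in (-β)..(π/2), Real.cos θ * Real.sin (θ + β) = H (π/2) - H (-β) := by
      refine intervalIntegral.integral_eq_sub_of_hasDerivAt (f := H) (fun θ _ => ?_) ?_
      · have h1 : HasDerivAt (fun θ : ℝ => 2*θ+β) 2 θ := by
          simpa using ((hasDerivAt_id θ).const_mul 2).add_const β
        have h2 : HasDerivAt (fun θ : ℝ => -Real.cos (2*θ+β)/4)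
            (Real.sin (2*θ+β) * 2 / 4) θ := by
          have := (h1.cos).neg.div_const 4
          simpa using this
        have h3 : HasDerivAt (fun θ : ℝ => θ * (Real.sin β / 2)) (Real.sin β / 2) θ := by
          simpa using hasDerivAt_mul_const (Real.sin β / 2) (x := θ)
        have := h2.add h3
        refine this.congr_deriv (Eq.symm ?_)
        rw [show 2*θ+β = θ+(θ+β) by ring]
        simp only [Real.sin_add, Real.cos_add]
        linear_combination (Real.sin β / 2) * (Real.sin_sq_add_cos_sq θ)
      · exact (Real.continuous_cos.mul (Real.continuous_sin.comp
          (continuous_id.add continuous_const))).intervalIntegrable _ _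
    rw [hftc]
    simp only [hH]
    rw [show 2*(π/2)+β = π + β by ring, show 2*(-β)+β = -β by ring, Real.cos_neg,
      Real.cos_add, Real.cos_pi, Real.sin_pi]
    ring
  linarith [split1, split2, split3, P1, P2, P3, P4]


/-- For `Z₁, Z₂` i.i.d. standard Gaussians and `c ∈ [−1,1]`,
`E[ReLU(Z₁)·ReLU(cZ₁ + √(1−c²)Z₂)] = (1/(2π))(c·arcsin c + √(1−c²)) + c/4`. -/
theorem gaussian_relu_correlation (c : ℝ) (hc : c ∈ Set.Icc (-1 : ℝ) 1) :
    (∫ p : ℝ × ℝ, max p.1 0 * max (c * p.1 + Real.sqrt (1 - c ^ 2) * p.2) 0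
        ∂((gaussianReal 0 1).prod (gaussianReal 0 1)))
      = (1 / (2 * π)) * (c * Real.arcsin c + Real.sqrt (1 - c ^ 2)) + c / 4 := by
  obtain ⟨hc1, hc2⟩ := hc
  have hπ := Real.pi_pos
  set s : ℝ := Real.sqrt (1 - c ^ 2) with hs
  set d : ℝ → ℝ := gaussianPDFReal 0 1 with hd
  set F : ℝ × ℝ → ℝ := fun p => max p.1 0 * max (c * p.1 + s * p.2) 0 with hF
  -- Step 1: pass to a density integral w.r.t. Lebesgue on ℝ²
  have step1 : (∫ p : ℝ × ℝ, F p ∂((gaussianReal 0 1).prod (gaussianReal 0 1)))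
      = ∫ p : ℝ × ℝ, d p.1 * d p.2 * F p := by
    rw [prod_gaussian]
    have hid : (fun p : ℝ × ℝ => ENNReal.ofReal (d p.1 * d p.2))
        = fun p : ℝ × ℝ => ((d p.1 * d p.2).toNNReal : ℝ≥0∞) := rfl
    have hmeas : Measurable (fun p : ℝ × ℝ => (d p.1 * d p.2).toNNReal) :=
      (((measurable_gaussianPDFReal 0 1).comp measurable_fst).mul
        ((measurable_gaussianPDFReal 0 1).comp measurable_snd)).real_toNNReal
    have hsmul := integral_withDensity_eq_integral_smul (μ := (volume : Measure (ℝ × ℝ)))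
      hmeas F
    rw [hid, hsmul]
    refine integral_congr_ae (Filter.Eventually.of_forall fun p => ?_)
    show (d p.1 * d p.2).toNNReal • F p = d p.1 * d p.2 * F p
    rw [NNReal.smul_def, Real.coe_toNNReal _
      (mul_nonneg (gaussianPDFReal_nonneg _ _ _) (gaussianPDFReal_nonneg _ _ _)),
      smul_eq_mul]
  rw [step1, ← integral_comp_polarCoord_symm (fun p => d p.1 * d p.2 * F p)]
  -- Step 2: simplify the polar integrand on the target set
  have htarget : polarCoord.target = Ioi (0:ℝ) ×ˢ Ioo (-π) π := rfl
  set g : ℝ → ℝ := fun θ => max (Real.cos θ) 0 * max (c * Real.cos θ + s * Real.sin θ) 0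
    with hg
  have step2 : ∫ p in polarCoord.target,
        p.1 • (d (polarCoord.symm p).1 * d (polarCoord.symm p).2 * F (polarCoord.symm p))
      = ∫ p in polarCoord.target,
        (p.1 ^ 3 * Real.exp (-p.1 ^ 2 / 2) * (2 * π)⁻¹) * g p.2 := by
    refine setIntegral_congr_fun (polarCoord.open_target.measurableSet) fun p hp => ?_
    rw [htarget] at hp
    obtain ⟨hp1, hp2⟩ := hp
    have hr : (0:ℝ) < p.1 := hp1
    rw [polarCoord_symm_apply]
    have hdd : d (p.1 * Real.cos p.2) * d (p.1 * Real.sin p.2)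
        = (2 * π)⁻¹ * Real.exp (-p.1 ^ 2 / 2) := by
      rw [hd, pdf_prod,
        show (p.1 * Real.cos p.2) ^ 2 + (p.1 * Real.sin p.2) ^ 2 = p.1 ^ 2 by
          nlinarith [Real.sin_sq_add_cos_sq p.2]]
    have hF1 : F (p.1 * Real.cos p.2, p.1 * Real.sin p.2) = p.1 ^ 2 * g p.2 := by
      rw [hF, hg]
      simp only []
      have h1 : max (p.1 * Real.cos p.2) 0 = p.1 * max (Real.cos p.2) 0 := by
        rw [mul_max_of_nonneg _ _ hr.le, mul_zero]
      have h2 : c * (p.1 * Real.cos p.2) + s * (p.1 * Real.sin p.2)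
          = p.1 * (c * Real.cos p.2 + s * Real.sin p.2) := by ring
      have h3 : max (p.1 * (c * Real.cos p.2 + s * Real.sin p.2)) 0
          = p.1 * max (c * Real.cos p.2 + s * Real.sin p.2) 0 := by
        rw [mul_max_of_nonneg _ _ hr.le, mul_zero]
      rw [h1, h2, h3]
      ring
    rw [hdd, hF1]
    simp only [smul_eq_mul]
    ring
  rw [step2, htarget]
  -- Step 3: Fubini for the product set
  have step3 : ∫ p in Ioi (0:ℝ) ×ˢ Ioo (-π) π,
        (p.1 ^ 3 * Real.exp (-p.1 ^ 2 / 2) * (2 * π)⁻¹) * g p.2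
      = (∫ r in Ioi (0:ℝ), r ^ 3 * Real.exp (-r ^ 2 / 2) * (2 * π)⁻¹)
        * ∫ θ in Ioo (-π) π, g θ := by
    rw [Measure.volume_eq_prod]
    exact setIntegral_prod_mul (fun r => r ^ 3 * Real.exp (-r ^ 2 / 2) * (2 * π)⁻¹) g _ _
  rw [step3]
  -- Step 4: the radial integral
  have hrad : ∫ r in Ioi (0:ℝ), r ^ 3 * Real.exp (-r ^ 2 / 2) * (2 * π)⁻¹ = 2 * (2 * π)⁻¹ := by
    rw [MeasureTheory.integral_mul_const, radial_int]
  rw [hrad]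
  -- Step 5: the angular integral
  set β : ℝ := Real.arcsin c with hβ
  have hsinβ : Real.sin β = c := Real.sin_arcsin hc1 hc2
  have hcosβ : Real.cos β = s := by rw [hβ, Real.cos_arcsin]
  have hang : ∫ θ in Ioo (-π) π, g θ
      = Real.cos β / 2 + π * Real.sin β / 4 + β * Real.sin β / 2 := by
    rw [← angular_int (Real.arcsin_mem_Icc c)]
    refine setIntegral_congr_fun measurableSet_Ioo fun θ _ => ?_
    rw [hg]
    simp only []
    rw [Real.sin_add, hsinβ, hcosβ]
    ring_nf
  rw [hang, hsinβ, hcosβ]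
  field_simp
  ring
end

section
/- Let (ζ_l) be a sequence in (0,1) satisfying ζ_l = ζ_{l−1} − η·ζ_{l−1}^{3/2} + O(ζ_{l−1}^{5/2}) for some η > 0, with ζ_l → 0. Then ζ_l ~ 4/(η² l²) as l → ∞. -/
open Real Set Filter Topology

/-- If `ζ_{l+1} = ζ_l − η ζ_l^{3/2} + O(ζ_l^{5/2})` with `ζ_l ∈ (0,1)` and `ζ_l → 0`,
then `ζ_l ~ 4/(η² l²)`. -/
theorem zeta_recursion_asymptotics (ζ : ℕ → ℝ) (η : ℝ) (hη : 0 < η)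
    (hrange : ∀ l, ζ l ∈ Set.Ioo (0 : ℝ) 1)
    (hlim : Tendsto ζ atTop (𝓝 0))
    (hrec : ∃ C : ℝ, ∀ l, |ζ (l + 1) - (ζ l - η * ζ l ^ ((3 : ℝ) / 2))| ≤
      C * ζ l ^ ((5 : ℝ) / 2)) :
    Tendsto (fun l : ℕ => ζ l * (l : ℝ) ^ 2) atTop (𝓝 (4 / η ^ 2)) := by
  obtain ⟨C, hC⟩ := hrec
  have hx : ∀ l, 0 < ζ l := fun l => (hrange l).1
  have hs : ∀ l, 0 < Real.sqrt (ζ l) := fun l => Real.sqrt_pos.2 (hx l)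
  have hsq : ∀ l, Real.sqrt (ζ l) ^ 2 = ζ l := fun l => Real.sq_sqrt (hx l).le
  -- rpow facts
  have h32 : ∀ l, ζ l ^ ((3:ℝ)/2) = ζ l * Real.sqrt (ζ l) := by
    intro l
    rw [show (3:ℝ)/2 = 1 + 1/2 by norm_num, Real.rpow_add (hx l), Real.rpow_one,
      ← Real.sqrt_eq_rpow]
  have h52 : ∀ l, ζ l ^ ((5:ℝ)/2) = ζ l ^ ((3:ℝ)/2) * ζ l := by
    intro l
    rw [show (5:ℝ)/2 = 3/2 + 1 by norm_num, Real.rpow_add (hx l), Real.rpow_one]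
  have h32pos : ∀ l, 0 < ζ l ^ ((3:ℝ)/2) := fun l => Real.rpow_pos_of_pos (hx l) _
  -- A l := (ζ l - ζ (l+1)) / ζ l ^ (3/2), A l → η
  set A : ℕ → ℝ := fun l => (ζ l - ζ (l + 1)) / ζ l ^ ((3:ℝ)/2) with hAdef
  have hA : Tendsto A atTop (𝓝 η) := by
    rw [← tendsto_sub_nhds_zero_iff]
    have hbound : ∀ l, ‖A l - η‖ ≤ C * ζ l := by
      intro l
      have h1 : A l - η = -(ζ (l + 1) - (ζ l - η * ζ l ^ ((3:ℝ)/2))) / ζ l ^ ((3:ℝ)/2) := by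
        rw [hAdef]
        field_simp [(h32pos l).ne']
        ring
      rw [Real.norm_eq_abs, h1, abs_div, abs_neg, abs_of_pos (h32pos l)]
      rw [div_le_iff₀ (h32pos l)]
      calc |ζ (l + 1) - (ζ l - η * ζ l ^ ((3:ℝ)/2))| ≤ C * ζ l ^ ((5:ℝ)/2) := hC l
        _ = C * ζ l * ζ l ^ ((3:ℝ)/2) := by rw [h52 l]; ring
    have hCz : Tendsto (fun l => C * ζ l) atTop (𝓝 0) := by
      simpa using (tendsto_const_nhds (x := C)).mul hlim
    exact squeeze_zero_norm hbound hCz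
  -- r l := ζ (l+1) / ζ l → 1
  have hr : Tendsto (fun l => ζ (l + 1) / ζ l) atTop (𝓝 1) := by
    have heq : ∀ l, ζ (l + 1) / ζ l = 1 - Real.sqrt (ζ l) * A l := by
      intro l
      rw [hAdef]
      field_simp [h32 l, (hx l).ne', (hs l).ne']
      rw [h32 l]; ring
    have hsz : Tendsto (fun l => Real.sqrt (ζ l)) atTop (𝓝 0) := by
      have := (Real.continuous_sqrt.tendsto 0).comp hlim
      simpa [Function.comp_def] using this
    have h2 : Tendsto (fun l => 1 - Real.sqrt (ζ l) * A l) atTop (𝓝 (1 - 0 * η)) :=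
      tendsto_const_nhds.sub (hsz.mul hA)
    rw [funext heq]
    simpa using h2
  -- u l := 1 / sqrt (ζ l); difference tends to η/2
  set u : ℕ → ℝ := fun l => (Real.sqrt (ζ l))⁻¹ with hudef
  have hdiff : Tendsto (fun l => u (l + 1) - u l) atTop (𝓝 (η / 2)) := by
    have heq : ∀ l, u (l + 1) - u l
        = A l / (Real.sqrt (ζ (l+1) / ζ l) * (1 + Real.sqrt (ζ (l+1) / ζ l))) := by
      intro l
      have hdiv : Real.sqrt (ζ (l+1) / ζ l) = Real.sqrt (ζ (l+1)) / Real.sqrt (ζ l) :=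
        Real.sqrt_div (hx (l+1)).le _
      show (Real.sqrt (ζ (l+1)))⁻¹ - (Real.sqrt (ζ l))⁻¹
        = ((ζ l - ζ (l + 1)) / ζ l ^ ((3:ℝ)/2)) / (Real.sqrt (ζ (l+1) / ζ l)
          * (1 + Real.sqrt (ζ (l+1) / ζ l)))
      rw [hdiv, h32 l]
      have e1 := hsq l; have e2 := hsq (l+1)
      have hs1 := (hs l).ne'; have hs2 := (hs (l+1)).ne'
      have hden : Real.sqrt (ζ l) + Real.sqrt (ζ (l+1)) ≠ 0 := by positivity
      rw [← e1, ← e2]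
      field_simp
      have k1 := Real.sqrt_sq (hs l).le; have k2 := Real.sqrt_sq (hs (l+1)).le
      rw [k1, k2]; ring
    rw [funext heq]
    have hsr : Tendsto (fun l => Real.sqrt (ζ (l+1) / ζ l)) atTop (𝓝 1) := by
      have := (Real.continuous_sqrt.tendsto 1).comp hr
      simpa [Function.comp_def] using this
    have h3 : Tendsto (fun l => A l / (Real.sqrt (ζ (l+1) / ζ l) * (1 + Real.sqrt (ζ (l+1) / ζ l))))
        atTop (𝓝 (η / (1 * (1 + 1)))) :=
      hA.div (hsr.mul (tendsto_const_nhds.add hsr)) (by norm_num)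
    norm_num at h3
    exact h3
  -- Cesàro: u n / n → η/2
  have hun : Tendsto (fun n : ℕ => (n : ℝ)⁻¹ * u n) atTop (𝓝 (η / 2)) := by
    have hces := hdiff.cesaro
    have hsum : ∀ n, ∑ i ∈ Finset.range n, (u (i + 1) - u i) = u n - u 0 :=
      fun n => Finset.sum_range_sub u n
    have h1 : Tendsto (fun n : ℕ => (n : ℝ)⁻¹ * (u n - u 0)) atTop (𝓝 (η / 2)) := by
      simp only [hsum] at hces
      exact hces
    have h2 : Tendsto (fun n : ℕ => (n : ℝ)⁻¹ * u 0) atTop (𝓝 0) := by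
      simpa using (tendsto_inv_atTop_nhds_zero_nat : Tendsto (fun n : ℕ => (n : ℝ)⁻¹) atTop (𝓝 0)).mul_const (u 0)
    have := h1.add h2
    simp only [mul_sub] at this
    simpa using this
  -- conclude
  have hfinal : Tendsto (fun n : ℕ => (((n : ℝ)⁻¹ * u n)⁻¹) ^ 2) atTop (𝓝 ((2 / η) ^ 2)) := by
    have : Tendsto (fun n : ℕ => ((n : ℝ)⁻¹ * u n)⁻¹) atTop (𝓝 ((η / 2)⁻¹)) :=
      hun.inv₀ (by positivity)
    rw [show ((η:ℝ)/2)⁻¹ = 2 / η by rw [inv_div]] at this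
    exact this.pow 2
  have hval : (2 / η) ^ 2 = 4 / η ^ 2 := by rw [div_pow]; norm_num
  rw [← hval]
  apply hfinal.congr'
  filter_upwards [Ici_mem_atTop 1] with n hn
  have hn0 : (0 : ℝ) < n := by exact_mod_cast Nat.lt_of_lt_of_le Nat.zero_lt_one hn
  rw [hudef]
  rw [mul_inv, inv_inv, inv_inv, mul_pow, hsq n]
  ring
end

section
/- Fix γ > 1 and ε ∈ (0,2). Let Q_x denote the x-quantile of |Z| where Z ~ N(0,1), i.e. P(|Z| ≤ Q_x) = x. Then there exists x_ε ∈ (0,1) such that for all x > x_ε, γ·Q_x > Q_{1 − (1−x)^{γ^{2−ε}}}. -/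
open Real Set MeasureTheory ProbabilityTheory Filter Topology

set_option maxHeartbeats 1000000

lemma fgq_hasDerivAt (x : ℝ) :
    HasDerivAt (fun y : ℝ => -Real.exp (-(y^2/2))) (x * Real.exp (-(x^2/2))) x := by
  have h1 : HasDerivAt (fun y : ℝ => -(y^2/2)) (-x) x := by
    have h : HasDerivAt (fun y : ℝ => -(y^2/2)) (-(((2:ℕ):ℝ) * x ^ (2 - 1) / 2)) x := ((hasDerivAt_pow 2 x).div_const 2).neg
    convert h using 1
    norm_num
  have h2 : HasDerivAt (fun y : ℝ => -Real.exp (-(y^2/2))) (-(Real.exp (-(x^2/2)) * -x)) x := (h1.exp).neg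
  convert h2 using 1
  ring

lemma fgq_tendsto : Tendsto (fun y : ℝ => -Real.exp (-(y^2/2))) atTop (𝓝 0) := by
  have h2 : Tendsto (fun y : ℝ => y^2/2) atTop atTop :=
    (tendsto_pow_atTop two_ne_zero).atTop_div_const two_pos
  have h3 : Tendsto (fun y : ℝ => Real.exp (-(y^2/2))) atTop (𝓝 0) :=
    Real.tendsto_exp_neg_atTop_nhds_zero.comp h2
  simpa using h3.neg

lemma fgq_integrableOn {t : ℝ} (ht : 0 ≤ t) :
    IntegrableOn (fun x : ℝ => x * Real.exp (-(x^2/2))) (Ioi t) := by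
  refine integrableOn_Ioi_deriv_of_nonneg' (fun x _ => fgq_hasDerivAt x) (fun x hx => ?_) fgq_tendsto
  exact mul_nonneg (le_trans ht (le_of_lt hx)) (Real.exp_pos _).le

lemma fgq_integral {t : ℝ} (ht : 0 ≤ t) :
    ∫ x in Ioi t, x * Real.exp (-(x^2/2)) = Real.exp (-(t^2/2)) := by
  have h := integral_Ioi_of_hasDerivAt_of_nonneg' (fun x (_ : x ∈ Ici t) => fgq_hasDerivAt x)
    (fun x hx => mul_nonneg (le_trans ht (le_of_lt hx)) (Real.exp_pos _).le) fgq_tendsto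
  simpa using h

lemma fgq_pdf_eq (x : ℝ) :
    gaussianPDFReal 0 1 x = (Real.sqrt (2*π))⁻¹ * Real.exp (-(x^2/2)) := by
  simp [gaussianPDFReal, neg_div]

lemma fgq_sqrt_two_pi_lb : 2 ≤ Real.sqrt (2*π) := by
  rw [show (2:ℝ) ≤ Real.sqrt (2*π) ↔ (2:ℝ)^2 ≤ 2*π from Real.le_sqrt (by norm_num) (by positivity)]
  nlinarith [Real.pi_gt_three]

lemma fgq_sqrt_two_pi_ub : Real.sqrt (2*π) ≤ Real.exp 1 := by
  have h : 2*π ≤ (Real.exp 1)^2 := by nlinarith [Real.exp_one_gt_d9, Real.pi_lt_d2]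
  calc Real.sqrt (2*π) ≤ Real.sqrt ((Real.exp 1)^2) := Real.sqrt_le_sqrt h
    _ = Real.exp 1 := Real.sqrt_sq (Real.exp_pos 1).le

lemma fgq_tail_upper {t : ℝ} (ht : 1 ≤ t) :
    ∫ x in Ioi t, gaussianPDFReal 0 1 x ≤ Real.exp (-(t^2/2)) / 2 := by
  have ht0 : (0:ℝ) ≤ t := le_trans zero_le_one ht
  have hInt : IntegrableOn (fun x : ℝ => (1/2) * (x * Real.exp (-(x^2/2)))) (Ioi t) :=
    (fgq_integrableOn ht0).const_mul _
  have hmono : ∀ x ∈ Ioi t, gaussianPDFReal 0 1 x ≤ (1/2) * (x * Real.exp (-(x^2/2))) := by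
    intro x hx
    have hx1 : 1 ≤ x := le_trans ht (le_of_lt hx)
    rw [fgq_pdf_eq]
    have h1 : (Real.sqrt (2*π))⁻¹ ≤ 1/2 := by
      rw [inv_le_comm₀ (by positivity) (by norm_num)]
      simpa using fgq_sqrt_two_pi_lb
    have h2 : Real.exp (-(x^2/2)) ≤ x * Real.exp (-(x^2/2)) :=
      le_mul_of_one_le_left (Real.exp_pos _).le hx1
    calc (Real.sqrt (2*π))⁻¹ * Real.exp (-(x^2/2)) ≤ (1/2) * Real.exp (-(x^2/2)) := by
          apply mul_le_mul_of_nonneg_right h1 (Real.exp_pos _).le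
      _ ≤ (1/2) * (x * Real.exp (-(x^2/2))) := by nlinarith [Real.exp_pos (-(x^2/2))]
  calc ∫ x in Ioi t, gaussianPDFReal 0 1 x
      ≤ ∫ x in Ioi t, (1/2) * (x * Real.exp (-(x^2/2))) :=
        setIntegral_mono_on ((integrable_gaussianPDFReal 0 1).integrableOn) hInt
          measurableSet_Ioi hmono
    _ = (1/2) * ∫ x in Ioi t, x * Real.exp (-(x^2/2)) := by rw [MeasureTheory.integral_const_mul]
    _ = Real.exp (-(t^2/2)) / 2 := by rw [fgq_integral ht0]; ring

lemma fgq_tail_lower {t : ℝ} (ht : 0 ≤ t) :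
    Real.exp (-1) * Real.exp (-((t+1)^2/2)) ≤ ∫ x in Ioc t (t+1), gaussianPDFReal 0 1 x := by
  have hmono : ∀ x ∈ Ioc t (t+1),
      Real.exp (-1) * Real.exp (-((t+1)^2/2)) ≤ gaussianPDFReal 0 1 x := by
    intro x hx
    rw [fgq_pdf_eq]
    have hx0 : 0 ≤ x := le_trans ht hx.1.le
    have h1 : Real.exp (-1 : ℝ) ≤ (Real.sqrt (2*π))⁻¹ := by
      rw [Real.exp_neg]
      exact inv_anti₀ (by positivity) fgq_sqrt_two_pi_ub
    have h2 : Real.exp (-((t+1)^2/2)) ≤ Real.exp (-(x^2/2)) := by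
      apply Real.exp_le_exp.2
      have : x^2 ≤ (t+1)^2 := pow_le_pow_left₀ hx0 hx.2 2
      linarith
    exact mul_le_mul h1 h2 (Real.exp_pos _).le (by positivity)
  calc Real.exp (-1) * Real.exp (-((t+1)^2/2))
      = ∫ _x in Ioc t (t+1), Real.exp (-1) * Real.exp (-((t+1)^2/2)) := by
        rw [setIntegral_const, Real.volume_real_Ioc]
        norm_num
    _ ≤ ∫ x in Ioc t (t+1), gaussianPDFReal 0 1 x :=
        setIntegral_mono_on (integrableOn_const measure_Ioc_lt_top.ne)
          ((integrable_gaussianPDFReal 0 1).integrableOn) measurableSet_Ioc hmono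

lemma fgq_map_neg : (gaussianReal 0 1).map ((-1 : ℝ) * ·) = gaussianReal 0 1 := by
  have h := gaussianReal_map_const_mul (μ := 0) (v := 1) (-1 : ℝ)
  rw [h]
  norm_num

lemma fgq_measure_tail_upper {t : ℝ} (ht : 1 ≤ t) :
    gaussianReal 0 1 {z : ℝ | t < |z|} ≤ ENNReal.ofReal (Real.exp (-(t^2/2))) := by
  have hset : {z : ℝ | t < |z|} ⊆ Iio (-t) ∪ Ioi t := by
    intro z hz
    rcases lt_abs.1 (show t < |z| from hz) with h | h
    · exact Or.inr h
    · exact Or.inl (by simpa [lt_neg] using h)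
  have hIoi : gaussianReal 0 1 (Ioi t) ≤ ENNReal.ofReal (Real.exp (-(t^2/2)) / 2) := by
    rw [gaussianReal_apply_eq_integral 0 one_ne_zero]
    exact ENNReal.ofReal_le_ofReal (fgq_tail_upper ht)
  have hIio : gaussianReal 0 1 (Iio (-t)) = gaussianReal 0 1 (Ioi t) := by
    have hpre : ((-1 : ℝ) * ·) ⁻¹' (Ioi t) = Iio (-t) := by
      ext x; simp [lt_neg]
    rw [← hpre, ← Measure.map_apply (measurable_const_mul (-1)) measurableSet_Ioi, fgq_map_neg]
  calc gaussianReal 0 1 {z : ℝ | t < |z|}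
      ≤ gaussianReal 0 1 (Iio (-t) ∪ Ioi t) := measure_mono hset
    _ ≤ gaussianReal 0 1 (Iio (-t)) + gaussianReal 0 1 (Ioi t) := measure_union_le _ _
    _ ≤ ENNReal.ofReal (Real.exp (-(t^2/2)) / 2) + ENNReal.ofReal (Real.exp (-(t^2/2)) / 2) := by
        rw [hIio]; exact add_le_add hIoi hIoi
    _ = ENNReal.ofReal (Real.exp (-(t^2/2))) := by
        rw [← ENNReal.ofReal_add (by positivity) (by positivity)]
        norm_num
lemma fgq_measure_tail_lower {t : ℝ} (ht : 0 ≤ t) :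
    ENNReal.ofReal (Real.exp (-1) * Real.exp (-((t+1)^2/2))) ≤
      gaussianReal 0 1 {z : ℝ | t < |z|} := by
  have hset : Ioc t (t+1) ⊆ {z : ℝ | t < |z|} := by
    intro z hz
    exact lt_of_lt_of_le hz.1 (le_abs_self z)
  calc ENNReal.ofReal (Real.exp (-1) * Real.exp (-((t+1)^2/2)))
      ≤ gaussianReal 0 1 (Ioc t (t+1)) := by
        rw [gaussianReal_apply_eq_integral 0 one_ne_zero]
        exact ENNReal.ofReal_le_ofReal (fgq_tail_lower ht)
    _ ≤ gaussianReal 0 1 {z : ℝ | t < |z|} := measure_mono hset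

lemma fgq_arith1 {κ' L : ℝ} (h1 : 1 < κ') (hL : 1 < L) : (1:ℝ)^2 ≤ 2*κ'*L := by nlinarith

lemma fgq_arith2 {κ κ' L : ℝ} (h : κ < κ') (hL : 0 < L) : -(2*κ'*L/2) < -L*κ := by
  have h2 := mul_lt_mul_of_pos_right h hL
  nlinarith

lemma fgq_arith3 {γ κ' δ L c₁ : ℝ} (hγ0 : 0 < γ) (hκ'0 : 0 < κ') (hδ0 : 0 < δ)
    (hδ : δ = 1 - κ'/γ^2) (hL0 : 0 < L) (hLgt : 1 + 8*κ'/δ^2 + 5/δ < L)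
    (hsqrtb : c₁ ≤ Real.sqrt (2*κ'*L)) (hc₁sq : c₁^2 = 2*κ'*L/γ^2) :
    1 + (c₁+1)^2/2 < L := by
  have hγ2pos : (0:ℝ) < γ^2 := by positivity
  have hs1 : Real.sqrt (2*κ'*L) ≤ δ*L/2 := by
    rw [show δ*L/2 = Real.sqrt ((δ*L/2)^2) from
      (Real.sqrt_sq (div_nonneg (mul_nonneg hδ0.le hL0.le) (by norm_num))).symm]
    apply Real.sqrt_le_sqrt
    have h8 : 8*κ' ≤ δ^2 * L := by
      have hL8 : 8*κ'/δ^2 < L := by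
        have h5pos : (0:ℝ) < 5/δ := by positivity
        linarith
      calc 8*κ' = (8*κ'/δ^2) * δ^2 := by field_simp
        _ ≤ L * δ^2 := by nlinarith
        _ = δ^2 * L := by ring
    nlinarith [mul_le_mul_of_nonneg_right h8 hL0.le]
  have hs2 : (5:ℝ)/2 ≤ δ*L/2 := by
    have hL5 : 5/δ < L := by
      have h8pos : (0:ℝ) < 8*κ'/δ^2 := by positivity
      linarith
    rw [div_lt_iff₀ hδ0] at hL5
    rw [mul_comm] at hL5
    nlinarith
  have hexpand : (c₁+1)^2/2 = c₁^2/2 + c₁ + 1/2 := by ring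
  have hdel : δ*L = L - κ'*L/γ^2 := by
    rw [hδ]; field_simp
  have hchain : c₁ + 5/2 ≤ δ*L := by
    calc c₁ + 5/2 ≤ Real.sqrt (2*κ'*L) + 5/2 := by linarith
      _ ≤ δ*L/2 + δ*L/2 := by linarith
      _ = δ*L := by ring
  rw [hexpand, hc₁sq]
  rw [hdel] at hchain
  have heq : 2*κ'*L/γ^2/2 = κ'*L/γ^2 := by ring
  rw [heq]
  linarith

/-- For `γ > 1` and `ε ∈ (0,2)`, there exists `x_ε ∈ (0,1)` such that for all `x > x_ε`,
`γ Q_x > Q_{1 − (1−x)^{γ^{2−ε}}}`, where `Q` is the quantile function of `|Z|`, `Z ~ N(0,1)`. -/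
theorem folded_gaussian_quantile_ineq (γ ε : ℝ) (hγ : 1 < γ) (hε : ε ∈ Set.Ioo (0 : ℝ) 2)
    (Q : ℝ → ℝ)
    (hQ : ∀ p ∈ Set.Ioo (0 : ℝ) 1,
      (gaussianReal 0 1) {z : ℝ | |z| ≤ Q p} = ENNReal.ofReal p) :
    ∃ xε ∈ Set.Ioo (0 : ℝ) 1, ∀ x ∈ Set.Ioo (0 : ℝ) 1, xε < x →
      γ * Q x > Q (1 - (1 - x) ^ (γ ^ (2 - ε))) := by
  obtain ⟨hε0, hε2⟩ := hε
  have hγ0 : (0:ℝ) < γ := lt_trans one_pos hγ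
  set κ := γ ^ (2 - ε) with hκdef
  have hκ1 : 1 < κ := (Real.one_lt_rpow_iff_of_pos hγ0).2 (Or.inl ⟨hγ, by linarith⟩)
  have hκγ2 : κ < γ ^ 2 := by
    have h2 : γ ^ (2 - ε) < γ ^ ((2:ℕ):ℝ) :=
      (Real.rpow_lt_rpow_left_iff hγ).2 (by norm_num; linarith)
    rwa [Real.rpow_natCast] at h2
  set κ' := (κ + γ^2)/2 with hκ'def
  have hκκ' : κ < κ' := by rw [hκ'def]; linarith
  have hκ'γ : κ' < γ^2 := by rw [hκ'def]; linarith
  have hκ'1 : 1 < κ' := lt_trans hκ1 hκκ'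
  have hγ2pos : (0:ℝ) < γ^2 := by positivity
  set δ := 1 - κ'/γ^2 with hδdef
  have hδ0 : 0 < δ := by
    have h := (div_lt_one hγ2pos).2 hκ'γ
    rw [hδdef]; linarith
  set L₀ := 1 + 8*κ'/δ^2 + 5/δ with hL₀def
  have h8pos : 0 < 8*κ'/δ^2 := by positivity
  have h5pos : 0 < 5/δ := by positivity
  have hL₀pos : 0 < L₀ := by rw [hL₀def]; linarith
  refine ⟨1 - Real.exp (-L₀), ⟨?_, ?_⟩, ?_⟩
  · have h := Real.exp_lt_one_iff.2 (by linarith : -L₀ < 0)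
    linarith
  · have h := Real.exp_pos (-L₀)
    linarith
  intro x hx hxε
  obtain ⟨hx0, hx1⟩ := hx
  set u := 1 - x with hudef
  have hu0 : 0 < u := by rw [hudef]; linarith
  have hu1 : u < 1 := by rw [hudef]; linarith
  set L := -Real.log u with hLdef
  have hLgt : L₀ < L := by
    have h1 : u < Real.exp (-L₀) := by rw [hudef]; linarith
    have h2 : Real.log u < -L₀ := by
      calc Real.log u < Real.log (Real.exp (-L₀)) := Real.log_lt_log hu0 h1
        _ = -L₀ := Real.log_exp _
    rw [hLdef]; linarith
  have hL0 : 0 < L := lt_trans hL₀pos hLgt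
  have hL1 : 1 < L := by rw [hL₀def] at hLgt; linarith
  have huexp : u = Real.exp (-L) := by rw [hLdef, neg_neg, Real.exp_log hu0]
  set c₂ := Real.sqrt (2*κ'*L) with hc₂def
  have hc₂0 : 0 ≤ c₂ := Real.sqrt_nonneg _
  have hc₂sq : c₂^2 = 2*κ'*L := Real.sq_sqrt (by positivity)
  have hc₂1 : 1 ≤ c₂ := by
    rw [hc₂def, show (1:ℝ) ≤ Real.sqrt (2*κ'*L) ↔ (1:ℝ)^2 ≤ 2*κ'*L from
      Real.le_sqrt (by norm_num) (by positivity)]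
    exact fgq_arith1 hκ'1 hL1
  set c₁ := c₂/γ with hc₁def
  have hc₁0 : 0 ≤ c₁ := div_nonneg hc₂0 hγ0.le
  have hc₁c₂ : c₁ ≤ c₂ := by rw [hc₁def]; exact div_le_self hc₂0 hγ.le
  have hup : (0:ℝ) < u ^ κ := Real.rpow_pos_of_pos hu0 κ
  have hup1 : u ^ κ < 1 := Real.rpow_lt_one hu0.le hu1 (by linarith)
  have hp₂ : (1 - u ^ κ) ∈ Set.Ioo (0:ℝ) 1 := ⟨by linarith, by linarith⟩
  have htail : ∀ p ∈ Set.Ioo (0:ℝ) 1,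
      gaussianReal 0 1 {z : ℝ | Q p < |z|} = ENNReal.ofReal (1 - p) := by
    intro p hp
    have hset : {z : ℝ | Q p < |z|} = {z : ℝ | |z| ≤ Q p}ᶜ := by
      ext z; simp [not_le]
    have hmeas : MeasurableSet {z : ℝ | |z| ≤ Q p} :=
      measurableSet_le continuous_abs.measurable measurable_const
    rw [hset, measure_compl hmeas (measure_ne_top _ _), hQ p hp, measure_univ,
      ← ENNReal.ofReal_one, ← ENNReal.ofReal_sub _ hp.1.le]
  have hlogu : Real.log u = -L := by rw [hLdef]; ring
  have hexpint : Real.exp (-1) * Real.exp (-((c₁+1)^2/2)) > 0 := by positivity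
  clear_value κ κ' δ L₀ u L c₂ c₁
  -- Claim A
  have hA : Q (1 - u ^ κ) ≤ c₂ := by
    by_contra hcon
    push_neg at hcon
    have h1 : gaussianReal 0 1 {z : ℝ | Q (1 - u^κ) < |z|} ≤
        gaussianReal 0 1 {z : ℝ | c₂ < |z|} :=
      measure_mono (fun z hz => lt_trans hcon (show Q (1 - u^κ) < |z| from hz))
    have h2 := fgq_measure_tail_upper hc₂1
    have h3 : Real.exp (-(c₂^2/2)) < u ^ κ := by
      rw [hc₂sq, Real.rpow_def_of_pos hu0, hlogu]
      exact Real.exp_lt_exp.2 (fgq_arith2 hκκ' hL0)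
    have h4 : gaussianReal 0 1 {z : ℝ | Q (1 - u^κ) < |z|} = ENNReal.ofReal (u^κ) := by
      rw [htail _ hp₂]
      congr 1
      ring
    have h5 : gaussianReal 0 1 {z : ℝ | Q (1 - u^κ) < |z|} <
        gaussianReal 0 1 {z : ℝ | Q (1 - u^κ) < |z|} := by
      calc gaussianReal 0 1 {z : ℝ | Q (1 - u^κ) < |z|}
          ≤ gaussianReal 0 1 {z : ℝ | c₂ < |z|} := h1
        _ ≤ ENNReal.ofReal (Real.exp (-(c₂^2/2))) := h2
        _ < ENNReal.ofReal (u^κ) := (ENNReal.ofReal_lt_ofReal_iff hup).2 h3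
        _ = gaussianReal 0 1 {z : ℝ | Q (1 - u^κ) < |z|} := h4.symm
    exact lt_irrefl _ h5
  -- Claim B
  have hB : c₁ < Q x := by
    by_contra hcon
    push_neg at hcon
    have h1 : gaussianReal 0 1 {z : ℝ | c₁ < |z|} ≤
        gaussianReal 0 1 {z : ℝ | Q x < |z|} :=
      measure_mono (fun z hz => lt_of_le_of_lt hcon (show c₁ < |z| from hz))
    have h2 := fgq_measure_tail_lower hc₁0
    have hc₁sq : c₁^2 = 2*κ'*L/γ^2 := by rw [hc₁def, div_pow, hc₂sq]
    have harith : 1 + (c₁+1)^2/2 < L := by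
      have hsqrtb : c₁ ≤ Real.sqrt (2*κ'*L) := by rw [← hc₂def]; exact hc₁c₂
      exact fgq_arith3 hγ0 (by linarith) hδ0 hδdef hL0 (by linarith) hsqrtb hc₁sq
    have h3 : u < Real.exp (-1) * Real.exp (-((c₁+1)^2/2)) := by
      rw [huexp, ← Real.exp_add]
      apply Real.exp_lt_exp.2
      linarith
    have h4 : ENNReal.ofReal u < ENNReal.ofReal (Real.exp (-1) * Real.exp (-((c₁+1)^2/2))) :=
      (ENNReal.ofReal_lt_ofReal_iff hexpint).2 h3
    have h5 : gaussianReal 0 1 {z : ℝ | Q x < |z|} = ENNReal.ofReal u := by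
      rw [htail x ⟨hx0, hx1⟩, ← hudef]
    have h6 : ENNReal.ofReal u < ENNReal.ofReal u := by
      calc ENNReal.ofReal u
          < ENNReal.ofReal (Real.exp (-1) * Real.exp (-((c₁+1)^2/2))) := h4
        _ ≤ gaussianReal 0 1 {z : ℝ | c₁ < |z|} := h2
        _ ≤ gaussianReal 0 1 {z : ℝ | Q x < |z|} := h1
        _ = ENNReal.ofReal u := h5
    exact lt_irrefl _ h6
  have hgc : γ * c₁ = c₂ := by
    rw [hc₁def]; field_simp
  have hfin : γ * c₁ < γ * Q x := mul_lt_mul_of_pos_left hB hγ0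
  show γ * Q x > Q (1 - u ^ κ)
  rw [hgc] at hfin
  linarith
end

section
/- The quantile function Q of the folded standard normal distribution satisfies Q_{1−x} ~ √(−2 log x) as x → 0⁺, i.e. lim_{x→0⁺} Q_{1−x}/√(−2 log x) = 1. -/
open Real Set Filter Topology MeasureTheory ProbabilityTheory
open scoped ENNReal

lemma pdf01 (u : ℝ) : gaussianPDFReal 0 1 u = (√(2*π))⁻¹ * rexp (-u^2/2) := by
  simp [gaussianPDFReal]

lemma intU {t : ℝ} (ht : 0 < t) :
    ∫ u in Ioi t, rexp (-u^2/2) ≤ (1/t) * rexp (-t^2/2) := by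
  have hint2 : IntegrableOn (fun u : ℝ => rexp (t^2/2) * rexp (-(t*u))) (Ioi t) := by
    simp_rw [← neg_mul]
    exact (exp_neg_integrableOn_Ioi t ht).const_mul _
  have hint1 : IntegrableOn (fun u : ℝ => rexp (-u^2/2)) (Ioi t) := by
    have := (integrable_exp_neg_mul_sq (by norm_num : (0:ℝ) < 1/2)).integrableOn (s := Ioi t)
    refine this.congr_fun (fun u _ => by ring_nf) measurableSet_Ioi
  have hmono := setIntegral_mono_on hint1 hint2 measurableSet_Ioi (fun u hu => by
    rw [← Real.exp_add]
    apply Real.exp_le_exp.2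
    have : t ≤ u := le_of_lt hu
    nlinarith [sq_nonneg (u - t)])
  have hcomp : (∫ u in Ioi t, rexp (-(t*u))) = t⁻¹ * rexp (-(t*t)) := by
    have := integral_comp_mul_left_Ioi (fun x => rexp (-x)) t ht
    simp only [smul_eq_mul] at this
    rw [this, integral_exp_neg_Ioi]
  calc ∫ u in Ioi t, rexp (-u^2/2) ≤ ∫ u in Ioi t, rexp (t^2/2) * rexp (-(t*u)) := hmono
    _ = rexp (t^2/2) * ∫ u in Ioi t, rexp (-(t*u)) := integral_const_mul _ _
    _ = rexp (t^2/2) * (t⁻¹ * rexp (-(t*t))) := by rw [hcomp]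
    _ = (1/t) * rexp (-t^2/2) := by
        rw [mul_comm (rexp (t^2/2)), mul_assoc, ← Real.exp_add]
        ring_nf

lemma tail_upper {t : ℝ} (ht : 0 < t) :
    gaussianReal 0 1 {z : ℝ | t < |z|} ≤
      ENNReal.ofReal (2 * (√(2*π))⁻¹ * ((1/t) * rexp (-t^2/2))) := by
  have hsub : {z : ℝ | t < |z|} ⊆ Iic (-t) ∪ Ioi t := by
    intro z hz
    simp only [mem_setOf_eq] at hz
    rcases lt_abs.1 hz with h | h
    · exact Or.inr h
    · exact Or.inl (by simp only [mem_Iic]; linarith)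
  have hint : IntegrableOn (gaussianPDFReal 0 1) (Ioi t) :=
    (integrable_gaussianPDFReal 0 1).integrableOn
  have hI : ∫ x in Iic (-t), gaussianPDFReal 0 1 x = ∫ x in Ioi t, gaussianPDFReal 0 1 x := by
    rw [← integral_comp_neg_Ioi]
    congr 1
    ext x
    simp [pdf01, neg_sq]
  have hIle : ∫ x in Ioi t, gaussianPDFReal 0 1 x ≤ (√(2*π))⁻¹ * ((1/t) * rexp (-t^2/2)) := by
    calc ∫ x in Ioi t, gaussianPDFReal 0 1 x
        = (√(2*π))⁻¹ * ∫ x in Ioi t, rexp (-x^2/2) := by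
          simp_rw [pdf01]; exact integral_const_mul _ _
      _ ≤ (√(2*π))⁻¹ * ((1/t) * rexp (-t^2/2)) := by
          apply mul_le_mul_of_nonneg_left (intU ht)
          positivity
  calc gaussianReal 0 1 {z : ℝ | t < |z|}
      ≤ gaussianReal 0 1 (Iic (-t) ∪ Ioi t) := measure_mono hsub
    _ ≤ gaussianReal 0 1 (Iic (-t)) + gaussianReal 0 1 (Ioi t) := measure_union_le _ _
    _ = ENNReal.ofReal (∫ x in Iic (-t), gaussianPDFReal 0 1 x)
        + ENNReal.ofReal (∫ x in Ioi t, gaussianPDFReal 0 1 x) := by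
          rw [gaussianReal_apply_eq_integral _ one_ne_zero, gaussianReal_apply_eq_integral _ one_ne_zero]
    _ ≤ ENNReal.ofReal (2 * (√(2*π))⁻¹ * ((1/t) * rexp (-t^2/2))) := by
          have hnn : 0 ≤ ∫ x in Ioi t, gaussianPDFReal 0 1 x :=
            setIntegral_nonneg measurableSet_Ioi (fun x _ => gaussianPDFReal_nonneg 0 1 x)
          rw [hI, ← ENNReal.ofReal_add hnn hnn]
          apply ENNReal.ofReal_le_ofReal
          linarith

lemma tail_lower {t : ℝ} (ht : 0 ≤ t) :
    ENNReal.ofReal ((√(2*π))⁻¹ * rexp (-(t+1)^2/2)) ≤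
      gaussianReal 0 1 {z : ℝ | t < |z|} := by
  have hsub : Ioc t (t+1) ⊆ {z : ℝ | t < |z|} := by
    intro z hz
    simp only [mem_setOf_eq]
    have : t < z := hz.1
    calc t < z := this
      _ ≤ |z| := le_abs_self z
  refine le_trans ?_ (measure_mono hsub)
  rw [gaussianReal_apply_eq_integral _ one_ne_zero]
  apply ENNReal.ofReal_le_ofReal
  have hconst : ∫ x in Ioc t (t+1), (√(2*π))⁻¹ * rexp (-(t+1)^2/2) ∂(volume)
      = (√(2*π))⁻¹ * rexp (-(t+1)^2/2) := by
    rw [setIntegral_const]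
    simp [Real.volume_Ioc]
  rw [← hconst]
  apply setIntegral_mono_on
  · exact integrableOn_const (by simp [Real.volume_Ioc])
  · exact (integrable_gaussianPDFReal 0 1).integrableOn
  · exact measurableSet_Ioc
  · intro x hx
    rw [pdf01]
    apply mul_le_mul_of_nonneg_left _ (by positivity)
    apply Real.exp_le_exp.2
    have h1 : t < x := hx.1
    have h2 : x ≤ t + 1 := hx.2
    have h0 : 0 ≤ x := le_of_lt (lt_of_le_of_lt ht h1)
    nlinarith

lemma tailQ (Q : ℝ → ℝ)
    (hQ : ∀ p ∈ Set.Ioo (0 : ℝ) 1,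
      (gaussianReal 0 1) {z : ℝ | |z| ≤ Q p} = ENNReal.ofReal p)
    {x : ℝ} (hx : x ∈ Set.Ioo (0:ℝ) 1) :
    gaussianReal 0 1 {z : ℝ | Q (1-x) < |z|} = ENNReal.ofReal x := by
  have hp : (1 - x) ∈ Set.Ioo (0:ℝ) 1 := ⟨by linarith [hx.2], by linarith [hx.1]⟩
  have hA : MeasurableSet {z : ℝ | |z| ≤ Q (1-x)} :=
    (isClosed_le continuous_abs continuous_const).measurableSet
  have hcompl : {z : ℝ | Q (1-x) < |z|} = {z : ℝ | |z| ≤ Q (1-x)}ᶜ := by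
    ext z; simp [not_le]
  rw [hcompl, measure_compl hA (measure_ne_top _ _), measure_univ, hQ _ hp]
  rw [← ENNReal.ofReal_one, ← ENNReal.ofReal_sub _ (by linarith [hx.2] : (0:ℝ) ≤ 1 - x)]
  norm_num

lemma Qnonneg (Q : ℝ → ℝ)
    (hQ : ∀ p ∈ Set.Ioo (0 : ℝ) 1,
      (gaussianReal 0 1) {z : ℝ | |z| ≤ Q p} = ENNReal.ofReal p)
    {x : ℝ} (hx : x ∈ Set.Ioo (0:ℝ) 1) : 0 ≤ Q (1-x) := by
  by_contra h
  push_neg at h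
  have hp : (1 - x) ∈ Set.Ioo (0:ℝ) 1 := ⟨by linarith [hx.2], by linarith [hx.1]⟩
  have hempty : {z : ℝ | |z| ≤ Q (1-x)} = ∅ := by
    ext z
    simp only [mem_setOf_eq, mem_empty_iff_false, iff_false, not_le]
    exact lt_of_lt_of_le h (abs_nonneg z)
  have h2 := hQ _ hp
  rw [hempty] at h2
  simp only [measure_empty] at h2
  rw [eq_comm, ENNReal.ofReal_eq_zero] at h2
  linarith [hx.2]

lemma sqrt_tendsto_atTop : Tendsto Real.sqrt atTop atTop := by
  refine tendsto_atTop_atTop.2 (fun b => ⟨(max b 0)^2, fun a ha => ?_⟩)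
  have h0 : 0 ≤ max b 0 := le_max_right _ _
  calc b ≤ max b 0 := le_max_left _ _
    _ = √((max b 0)^2) := (Real.sqrt_sq h0).symm
    _ ≤ √a := Real.sqrt_le_sqrt ha

/-- The folded-Gaussian quantile function satisfies `Q_{1−x} ~ √(−2 log x)` as `x → 0⁺`. -/
theorem folded_gaussian_quantile_asymptotic (Q : ℝ → ℝ)
    (hQ : ∀ p ∈ Set.Ioo (0 : ℝ) 1,
      (gaussianReal 0 1) {z : ℝ | |z| ≤ Q p} = ENNReal.ofReal p) :
    Tendsto (fun x : ℝ => Q (1 - x) / Real.sqrt (-2 * Real.log x)) (𝓝[>] (0 : ℝ))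
      (𝓝 1) := by
  set c : ℝ := (√(2*π))⁻¹ with hc
  have hcpos : 0 < c := by positivity
  have hs : Tendsto (fun x : ℝ => √(-2 * Real.log x)) (𝓝[>] (0:ℝ)) atTop :=
    sqrt_tendsto_atTop.comp
      ((tendsto_const_mul_atTop_of_neg (by norm_num : (-2:ℝ) < 0)).2
        Real.tendsto_log_nhdsGT_zero)
  have hIoo : ∀ᶠ x in 𝓝[>] (0:ℝ), x ∈ Set.Ioo (0:ℝ) 1 :=
    eventually_of_mem (Ioo_mem_nhdsGT_of_mem ⟨le_refl 0, zero_lt_one⟩) (fun x hx => hx)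
  have hxeq : ∀ x ∈ Set.Ioo (0:ℝ) 1, rexp (-(√(-2 * Real.log x))^2/2) = x := by
    intro x hx
    have hlog : Real.log x < 0 := Real.log_neg hx.1 hx.2
    rw [Real.sq_sqrt (by linarith : (0:ℝ) ≤ -2 * Real.log x)]
    rw [show -(-2 * Real.log x)/2 = Real.log x by ring, Real.exp_log hx.1]
  rw [tendsto_order]
  constructor
  · -- lower bound: ∀ a < 1, eventually a < Q(1-x)/s x
    intro a ha
    set b : ℝ := (max a 0 + 1)/2 with hbdef
    have hm0 : 0 ≤ max a 0 := le_max_right _ _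
    have hm1 : max a 0 < 1 := max_lt ha zero_lt_one
    have hb0 : 0 < b := by rw [hbdef]; linarith
    have hb1 : b < 1 := by rw [hbdef]; linarith
    have hab : a < b := lt_of_le_of_lt (le_max_left a 0) (by rw [hbdef]; linarith)
    -- eventual inequality in s
    have hlin : Tendsto (fun s:ℝ => (b^2-1)*s + 2*b) atTop atBot :=
      tendsto_atBot_add_const_right _ _
        ((tendsto_const_mul_atBot_of_neg (by nlinarith : b^2 - 1 < 0)).2 tendsto_id)
    have hquad : Tendsto (fun s:ℝ => (s * ((b^2-1)*s + 2*b) + 1)/2) atTop atBot :=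
      Tendsto.atBot_div_const two_pos
        (tendsto_atBot_add_const_right _ _ (Tendsto.atTop_mul_atBot₀ tendsto_id hlin))
    have hexp : Tendsto (fun s:ℝ => rexp (((b*s+1)^2 - s^2)/2)) atTop (𝓝 0) := by
      refine (Real.tendsto_exp_atBot.comp hquad).congr (fun s => ?_)
      simp only [Function.comp_apply]
      congr 1
      ring
    have hev : ∀ᶠ s in atTop, rexp (-s^2/2) < c * rexp (-(b*s+1)^2/2) := by
      filter_upwards [hexp.eventually_lt_const hcpos] with s hless
      have heq : -s^2/2 = ((b*s+1)^2 - s^2)/2 + (-(b*s+1)^2/2) := by ring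
      rw [heq, Real.exp_add]
      exact mul_lt_mul_of_pos_right hless (Real.exp_pos _)
    filter_upwards [hIoo, hs.eventually hev, hs.eventually_gt_atTop 0] with x hx hx2 hx3
    set s := √(-2 * Real.log x) with hsdef
    have hlt : x < c * rexp (-(b*s+1)^2/2) := by
      rw [← hxeq x hx]; exact hx2
    have hge : b * s ≤ Q (1-x) := by
      by_contra hcon
      push_neg at hcon
      have hsubset : {z:ℝ | b*s < |z|} ⊆ {z:ℝ | Q (1-x) < |z|} :=
        fun z hz => lt_trans hcon hz
      have h1 := tail_lower (t := b*s) (by positivity : (0:ℝ) < b*s).le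
      have h2 : gaussianReal 0 1 {z:ℝ | b*s < |z|} ≤ ENNReal.ofReal x := by
        rw [← tailQ Q hQ hx]
        exact measure_mono hsubset
      have h3 := le_trans h1 h2
      rw [ENNReal.ofReal_le_ofReal_iff hx.1.le] at h3
      linarith
    calc a < b := hab
      _ ≤ Q (1-x) / s := (le_div_iff₀ hx3).2 hge
  · -- upper bound: ∀ a > 1, eventually Q(1-x)/s x < a
    intro a ha
    set b : ℝ := (a + 1)/2 with hbdef
    have hb1 : 1 < b := by rw [hbdef]; linarith
    have hba : b < a := by rw [hbdef]; linarith
    have hb0 : 0 < b := by linarith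
    have h1 : Tendsto (fun s:ℝ => 2*c/(b*s)) atTop (𝓝 0) :=
      Tendsto.div_atTop tendsto_const_nhds (Tendsto.const_mul_atTop hb0 tendsto_id)
    have h2 : Tendsto (fun s:ℝ => rexp ((s^2-(b*s)^2)/2)) atTop (𝓝 0) := by
      have hquad : Tendsto (fun s:ℝ => (s * ((1-b^2)*s))/2) atTop atBot :=
        Tendsto.atBot_div_const two_pos
          (Tendsto.atTop_mul_atBot₀ tendsto_id
            ((tendsto_const_mul_atBot_of_neg (by nlinarith : 1 - b^2 < 0)).2 tendsto_id))
      refine (Real.tendsto_exp_atBot.comp hquad).congr (fun s => ?_)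
      simp only [Function.comp_apply]
      congr 1
      ring
    have hprod : Tendsto (fun s:ℝ => (2*c/(b*s)) * rexp ((s^2-(b*s)^2)/2)) atTop (𝓝 0) := by
      simpa using h1.mul h2
    have hev : ∀ᶠ s in atTop, 2*c*((1/(b*s))*rexp (-(b*s)^2/2)) < rexp (-s^2/2) := by
      filter_upwards [hprod.eventually_lt_const one_pos, eventually_gt_atTop (0:ℝ)]
        with s hless hs0
      have heq : 2*c*((1/(b*s))*rexp (-(b*s)^2/2))
          = ((2*c/(b*s)) * rexp ((s^2-(b*s)^2)/2)) * rexp (-s^2/2) := by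
        rw [mul_assoc (2*c/(b*s)), ← Real.exp_add,
          show (s^2-(b*s)^2)/2 + -s^2/2 = -(b*s)^2/2 by ring]
        ring
      rw [heq]
      calc ((2*c/(b*s)) * rexp ((s^2-(b*s)^2)/2)) * rexp (-s^2/2)
          < 1 * rexp (-s^2/2) := mul_lt_mul_of_pos_right hless (Real.exp_pos _)
        _ = rexp (-s^2/2) := one_mul _
    filter_upwards [hIoo, hs.eventually hev, hs.eventually_gt_atTop 0] with x hx hx2 hx3
    set s := √(-2 * Real.log x) with hsdef
    have hlt : 2*c*((1/(b*s))*rexp (-(b*s)^2/2)) < x := by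
      rw [← hxeq x hx]; exact hx2
    have hgt : Q (1-x) < b * s := by
      by_contra hcon
      push_neg at hcon
      have hsubset : {z:ℝ | Q (1-x) < |z|} ⊆ {z:ℝ | b*s < |z|} :=
        fun z hz => lt_of_le_of_lt hcon hz
      have h1' := tail_upper (t := b*s) (by positivity)
      have h2' : ENNReal.ofReal x ≤ gaussianReal 0 1 {z:ℝ | b*s < |z|} := by
        rw [← tailQ Q hQ hx]
        exact measure_mono hsubset
      have h3 := le_trans h2' h1'
      rw [ENNReal.ofReal_le_ofReal_iff (by positivity)] at h3
      have : 2 * c * (1 / (b * s) * rexp (-(b * s) ^ 2 / 2))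
          = 2 * (√(2*π))⁻¹ * (1 / (b*s) * rexp (-(b*s)^2/2)) := by rw [hc]
      linarith [this ▸ hlt]
    calc Q (1-x) / s < b := (div_lt_iff₀ hx3).2 hgt
      _ < a := hba
end

section
/- Let (ĉ^l) be a sequence in [0,1) satisfying ĉ^l = (1/(1+λ))·ĉ^{l−1} + (λ/(1+λ))·f(ĉ^{l−1}) with λ > 0, where f is the ReLU correlation function f(c) = (1/π)(c·arcsin(c) + √(1−c²)) + c/2. Then ĉ^l is nondecreasing and converges to 1, and 1 − ĉ^l ~ 4/(η² l²) where η = λβ/(1+λ) and β = 2√2/(3π). -/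
open Real Set Filter Topology

namespace PrunedAux

noncomputable def N (x : ℝ) : ℝ := Real.sqrt (1 - x ^ 2) - x * Real.arccos x

lemma reluCorr_sub (x : ℝ) : reluCorr x - x = N x / π := by
  have hπ : (π : ℝ) ≠ 0 := Real.pi_ne_zero
  simp only [reluCorr, N, Real.arccos]
  field_simp
  ring

lemma hasDerivAt_N {x : ℝ} (h1 : -1 < x) (h2 : x < 1) :
    HasDerivAt N (-(Real.arccos x)) x := by
  have hx2 : (0:ℝ) < 1 - x ^ 2 := by nlinarith
  have hsq : Real.sqrt (1 - x ^ 2) ≠ 0 := by positivity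
  have hs : HasDerivAt (fun y : ℝ => Real.sqrt (1 - y ^ 2)) (-x / Real.sqrt (1 - x ^ 2)) x := by
    have hin : HasDerivAt (fun y : ℝ => 1 - y ^ 2) (-(2 * x)) x := by
      simpa using ((hasDerivAt_pow 2 x).const_sub 1)
    have := (Real.hasDerivAt_sqrt hx2.ne').comp x hin
    refine this.congr_deriv (Eq.symm ?_)
    field_simp
  have ha : HasDerivAt (fun y : ℝ => y * Real.arccos y)
      (1 * Real.arccos x + x * (-(1 / Real.sqrt (1 - x ^ 2)))) x :=
    (hasDerivAt_id x).mul (Real.hasDerivAt_arccos h1.ne' h2.ne)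
  have := hs.sub ha
  refine this.congr_deriv (Eq.symm ?_)
  field_simp
  ring

lemma N_one : N 1 = 0 := by simp [N, Real.arccos_one]

lemma N_pos {x : ℝ} (h0 : 0 ≤ x) (h1 : x < 1) : 0 < N x := by
  have hanti : StrictAntiOn N (Icc 0 1) := by
    apply strictAntiOn_of_deriv_neg (convex_Icc 0 1)
    · exact ((Real.continuous_sqrt.comp (by continuity)).sub
        (continuous_id.mul Real.continuous_arccos)).continuousOn
    · intro y hy
      rw [interior_Icc] at hy
      rw [(hasDerivAt_N (by linarith [hy.1]) hy.2).deriv]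
      simpa using Real.arccos_pos.2 hy.2
  have := hanti ⟨h0, h1.le⟩ ⟨by norm_num, le_refl 1⟩ h1
  rwa [N_one] at this


lemma tendsto_sin_div : Tendsto (fun θ : ℝ => Real.sin θ / θ) (𝓝[≠] (0:ℝ)) (𝓝 1) := by
  have h := Real.hasDerivAt_sin 0
  rw [hasDerivAt_iff_tendsto_slope] at h
  simpa [slope_fun_def, Real.cos_zero, div_eq_inv_mul] using h

lemma tendsto_half : Tendsto (fun θ : ℝ => θ / 2) (𝓝[>] (0:ℝ)) (𝓝[>] (0:ℝ)) := by
  refine tendsto_nhdsWithin_of_tendsto_nhds_of_eventually_within _ ?_ ?_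
  · have := (continuous_id.div_const (2:ℝ)).tendsto (0:ℝ)
    simpa using this.mono_left nhdsWithin_le_nhds
  · filter_upwards [eventually_mem_nhdsWithin] with θ (hθ : (0:ℝ) < θ)
    exact half_pos hθ

lemma tendsto_sin_half : Tendsto (fun θ : ℝ => Real.sin (θ/2) / (θ/2)) (𝓝[>] (0:ℝ)) (𝓝 1) :=
  tendsto_sin_div.comp (tendsto_half.mono_right
    (nhdsWithin_mono 0 (fun x hx => ne_of_gt hx)))

lemma tendsto_theta_div : Tendsto (fun θ : ℝ => θ / (Real.sqrt 2 * Real.sin (θ/2)))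
    (𝓝[>] (0:ℝ)) (𝓝 (Real.sqrt 2)) := by
  have h := (tendsto_const_nhds (x := Real.sqrt 2) (f := 𝓝[>] (0:ℝ))).div
    tendsto_sin_half one_ne_zero
  rw [div_one] at h
  apply h.congr'
  filter_upwards [Ioo_mem_nhdsGT_of_mem (by constructor <;> [rfl; exact Real.pi_pos] :
    (0:ℝ) ∈ Ico 0 π)] with θ hθ
  have hsin : 0 < Real.sin (θ/2) :=
    Real.sin_pos_of_pos_of_lt_pi (half_pos hθ.1) (by linarith [hθ.2, Real.pi_pos])
  have h2 : Real.sqrt 2 * Real.sqrt 2 = 2 := Real.mul_self_sqrt (by norm_num)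
  simp only [Pi.div_apply]
  field_simp
  linear_combination θ * h2

lemma tendsto_arccos : Tendsto Real.arccos (𝓝[<] (1:ℝ)) (𝓝[>] (0:ℝ)) := by
  refine tendsto_nhdsWithin_of_tendsto_nhds_of_eventually_within _ ?_ ?_
  · have := Real.continuous_arccos.tendsto 1
    rw [Real.arccos_one] at this
    exact this.mono_left nhdsWithin_le_nhds
  · filter_upwards [eventually_mem_nhdsWithin] with x (hx : x < 1)
    exact Real.arccos_pos.2 hx

lemma sqrt_one_sub_eq {x : ℝ} (h1 : -1 ≤ x) (h2 : x ≤ 1) :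
    Real.sqrt (1 - x) = Real.sqrt 2 * Real.sin (Real.arccos x / 2) := by
  have hs : 0 ≤ Real.sin (Real.arccos x / 2) := Real.sin_nonneg_of_nonneg_of_le_pi
    (by linarith [Real.arccos_nonneg x]) (by linarith [Real.arccos_le_pi x, Real.pi_pos])
  calc Real.sqrt (1 - x) = Real.sqrt (2 * ((1 - Real.cos (Real.arccos x)) / 2)) := by
        rw [Real.cos_arccos h1 h2]; ring_nf
    _ = Real.sqrt 2 * Real.sqrt ((1 - Real.cos (Real.arccos x)) / 2) :=
        Real.sqrt_mul (by norm_num) _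
    _ = Real.sqrt 2 * |Real.sin (Real.arccos x / 2)| := by rw [Real.abs_sin_half]
    _ = Real.sqrt 2 * Real.sin (Real.arccos x / 2) := by rw [abs_of_nonneg hs]

lemma tendsto_arccos_div : Tendsto (fun x => Real.arccos x / Real.sqrt (1 - x))
    (𝓝[<] (1:ℝ)) (𝓝 (Real.sqrt 2)) := by
  have := tendsto_theta_div.comp tendsto_arccos
  apply this.congr'
  filter_upwards [Ioo_mem_nhdsLT_of_mem (by constructor <;> norm_num :
    (1:ℝ) ∈ Ioc (-1) 1)] with x hx
  simp only [Function.comp]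
  rw [sqrt_one_sub_eq hx.1.le hx.2.le]


lemma continuous_reluCorr : Continuous reluCorr := by
  unfold reluCorr
  exact ((continuous_const.mul ((continuous_id.mul Real.continuous_arcsin).add
    (Real.continuous_sqrt.comp (by continuity)))).add (continuous_id.div_const 2))

lemma tendsto_q : Tendsto (fun x => (reluCorr x - x) / ((1 - x) * Real.sqrt (1 - x)))
    (𝓝[<] (1:ℝ)) (𝓝 (2 * Real.sqrt 2 / (3 * π))) := by
  have hπ : (0:ℝ) < π := Real.pi_pos
  have hmem : Ioo (0:ℝ) 1 ∈ 𝓝[<] (1:ℝ) :=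
    Ioo_mem_nhdsLT_of_mem (by constructor <;> norm_num : (1:ℝ) ∈ Ioc 0 1)
  apply HasDerivAt.lhopital_zero_nhdsLT (f' := fun x => -(Real.arccos x) / π)
      (g' := fun x => -(3/2) * Real.sqrt (1 - x))
  · filter_upwards [hmem] with x hx
    have h := ((hasDerivAt_N (by linarith [hx.1]) hx.2).div_const π)
    exact h.congr_of_eventuallyEq (Filter.Eventually.of_forall fun y => reluCorr_sub y)
  · filter_upwards [hmem] with x hx
    have h1x : (0:ℝ) < 1 - x := by linarith [hx.2]
    have hin : HasDerivAt (fun y : ℝ => 1 - y) (-1) x := by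
      simpa using (hasDerivAt_id x).const_sub 1
    have hs : HasDerivAt (fun y : ℝ => Real.sqrt (1 - y))
        (1 / (2 * Real.sqrt (1 - x)) * (-1)) x :=
      (Real.hasDerivAt_sqrt h1x.ne').comp x hin
    have := hin.mul hs
    refine this.congr_deriv (Eq.symm ?_)
    have hsq : Real.sqrt (1 - x) ≠ 0 := by positivity
    field_simp
    linear_combination (-1 : ℝ) * Real.mul_self_sqrt h1x.le
  · filter_upwards [hmem] with x hx
    have h1x : (0:ℝ) < 1 - x := by linarith [hx.2]
    have : (0:ℝ) < Real.sqrt (1 - x) := Real.sqrt_pos.2 h1x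
    intro h
    nlinarith
  · have : Tendsto (fun x : ℝ => reluCorr x - x) (𝓝 1) (𝓝 0) := by
      have h := (continuous_reluCorr.sub continuous_id).tendsto 1
      change Tendsto (fun x => reluCorr x - x) (𝓝 1) (𝓝 (reluCorr 1 - 1)) at h
      have h11 : reluCorr 1 - 1 = 0 := by
        simp [reluCorr, Real.arcsin_one]
        field_simp
        ring
      rwa [h11] at h
    exact this.mono_left nhdsWithin_le_nhds
  · have : Tendsto (fun x : ℝ => (1 - x) * Real.sqrt (1 - x)) (𝓝 1) (𝓝 0) := by
      have hcont : Continuous (fun x : ℝ => (1 - x) * Real.sqrt (1 - x)) := by continuity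
      have h := hcont.tendsto 1
      simpa using h
    exact this.mono_left nhdsWithin_le_nhds
  · have h := tendsto_arccos_div.const_mul (2 / (3*π))
    have heq : 2 / (3*π) * Real.sqrt 2 = 2 * Real.sqrt 2 / (3 * π) := by ring
    rw [heq] at h
    apply h.congr'
    filter_upwards [hmem] with x hx
    have h1x : (0:ℝ) < 1 - x := by linarith [hx.2]
    have hsq : Real.sqrt (1 - x) ≠ 0 := by positivity
    field_simp

end PrunedAux

/-- Correlation propagation in a pruned ResNet: the recursion
`ĉ^{l+1} = ĉ^l/(1+λ) + λ f(ĉ^l)/(1+λ)` is nondecreasing, converges to 1, and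
`1 − ĉ^l ~ 4/(η² l²)` with `η = λβ/(1+λ)`, `β = 2√2/(3π)`. -/
theorem pruned_resnet_correlation (c : ℕ → ℝ) (lam : ℝ) (hlam : 0 < lam)
    (hrange : ∀ l, c l ∈ Set.Ico (0 : ℝ) 1)
    (hrec : ∀ l, c (l + 1) = (1 / (1 + lam)) * c l + (lam / (1 + lam)) * reluCorr (c l)) :
    Monotone c ∧ Tendsto c atTop (𝓝 1) ∧
    Tendsto (fun l : ℕ => (1 - c l) * (l : ℝ) ^ 2) atTop
      (𝓝 (4 / (lam * (2 * Real.sqrt 2 / (3 * π)) / (1 + lam)) ^ 2)) := by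
  have hπ : (0:ℝ) < π := Real.pi_pos
  have hβpos : (0:ℝ) < 2 * Real.sqrt 2 / (3 * π) := by positivity
  have h1lam : (0:ℝ) < 1 + lam := by linarith
  have hstep : ∀ l, c (l+1) - c l = (lam/(1+lam)) * (reluCorr (c l) - c l) := by
    intro l; rw [hrec l]; field_simp; ring
  have hgpos : ∀ l, 0 < reluCorr (c l) - c l := fun l => by
    rw [PrunedAux.reluCorr_sub]
    exact div_pos (PrunedAux.N_pos (hrange l).1 (hrange l).2) hπ
  have hmono : Monotone c := monotone_nat_of_le_succ fun l => by
    nlinarith [hstep l, hgpos l, div_pos hlam h1lam]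
  have hbdd : BddAbove (Set.range c) := ⟨1, forall_mem_range.2 fun l => (hrange l).2.le⟩
  have hlimL := tendsto_atTop_ciSup hmono hbdd
  have hL1 : (⨆ n, c n) ≤ 1 := ciSup_le fun n => (hrange n).2.le
  have hL0 : 0 ≤ (⨆ n, c n) := le_trans (hrange 0).1 (le_ciSup hbdd 0)
  have hfix : (⨆ n, c n) = 1 := by
    by_contra hne
    have hLlt : (⨆ n, c n) < 1 := lt_of_le_of_ne hL1 hne
    have h1 : Tendsto (fun l => c (l+1)) atTop (𝓝 (⨆ n, c n)) :=
      hlimL.comp (tendsto_add_atTop_nat 1)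
    have h2 : Tendsto (fun l => (1/(1+lam)) * c l + (lam/(1+lam)) * reluCorr (c l)) atTop
        (𝓝 ((1/(1+lam)) * (⨆ n, c n) + (lam/(1+lam)) * reluCorr (⨆ n, c n))) :=
      (tendsto_const_nhds.mul hlimL).add
        (tendsto_const_nhds.mul ((PrunedAux.continuous_reluCorr.tendsto _).comp hlimL))
    have heq := tendsto_nhds_unique (h1.congr (fun l => hrec l)) h2
    have hpos : 0 < reluCorr (⨆ n, c n) - (⨆ n, c n) := by
      rw [PrunedAux.reluCorr_sub]
      exact div_pos (PrunedAux.N_pos hL0 hLlt) hπ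
    have h3 : (⨆ n, c n) * (1 + lam) = (⨆ n, c n) + lam * reluCorr (⨆ n, c n) := by
      field_simp at heq
      linarith
    nlinarith
  have hlim : Tendsto c atTop (𝓝 1) := hfix ▸ hlimL
  refine ⟨hmono, hlim, ?_⟩
  set β := 2 * Real.sqrt 2 / (3 * π) with hβ
  set η := lam * β / (1 + lam) with hη
  have hηpos : 0 < η := by rw [hη]; positivity
  set ε : ℕ → ℝ := fun l => 1 - c l with hε
  have hεpos : ∀ l, 0 < ε l := fun l => by simp only [hε]; linarith [(hrange l).2]
  have hεlim : Tendsto ε atTop (𝓝 0) := by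
    have := (tendsto_const_nhds (x := (1:ℝ))).sub hlim
    simpa using this
  set q : ℝ → ℝ := fun x => (reluCorr x - x) / ((1 - x) * Real.sqrt (1 - x)) with hq
  have hcq : Tendsto (fun l => q (c l)) atTop (𝓝 β) := by
    apply PrunedAux.tendsto_q.comp
    refine tendsto_nhdsWithin_of_tendsto_nhds_of_eventually_within _ hlim ?_
    exact Filter.Eventually.of_forall fun l => (hrange l).2
  set r : ℕ → ℝ := fun l => (lam/(1+lam)) * q (c l) with hr
  have hrlim : Tendsto r atTop (𝓝 η) := by
    have h := hcq.const_mul (lam/(1+lam))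
    have : lam/(1+lam) * β = η := by rw [hη]; ring
    rwa [this] at h
  have hkey : ∀ l, ε l - ε (l+1) = r l * (ε l * Real.sqrt (ε l)) := by
    intro l
    have h1 : ε l - ε (l+1) = (lam/(1+lam)) * (reluCorr (c l) - c l) := by
      simp only [hε]; linarith [hstep l]
    have hel : ε l = 1 - c l := rfl
    have hne : (1 - c l) * Real.sqrt (1 - c l) ≠ 0 := by
      have := hεpos l
      rw [hel] at this
      positivity
    rw [h1, hr, hq, hel]
    beta_reduce
    rw [mul_assoc, div_mul_cancel₀ _ hne]
  have hsqlim : Tendsto (fun l => Real.sqrt (ε l)) atTop (𝓝 0) := by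
    have := (Real.continuous_sqrt.tendsto 0).comp hεlim
    simpa [Function.comp_def] using this
  have hρ : Tendsto (fun l => ε (l+1) / ε l) atTop (𝓝 1) := by
    have h := (tendsto_const_nhds (x := (1:ℝ))).sub (hrlim.mul hsqlim)
    rw [mul_zero, sub_zero] at h
    apply Tendsto.congr _ h
    intro l
    have h2 : ε (l+1) = ε l - r l * (ε l * Real.sqrt (ε l)) := by linarith [hkey l]
    rw [h2]
    field_simp [(hεpos l).ne']
  have hsρ : Tendsto (fun l => Real.sqrt (ε (l+1) / ε l)) atTop (𝓝 1) := by
    have := (Real.continuous_sqrt.tendsto 1).comp hρ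
    simpa [Function.comp_def] using this
  set u : ℕ → ℝ := fun l => 1 / Real.sqrt (ε l) with hu
  have hupos : ∀ l, 0 < u l := fun l => one_div_pos.2 (Real.sqrt_pos.2 (hεpos l))
  set d : ℕ → ℝ := fun l => u (l+1) - u l with hd
  have hID : ∀ (a b r : ℝ), 0 < a → 0 < b → a^2 - b^2 = r * (a^2 * a) →
      1/b - 1/a = r / ((b/a) * (1 + b/a)) := by
    intro a b r ha hb hab
    have h1 : (b/a) * (1 + b/a) = (b * (a+b))/a^2 := by field_simp
    rw [h1, div_div_eq_mul_div, eq_div_iff (by positivity : b*(a+b) ≠ 0)]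
    field_simp
    linear_combination hab
  have hdlim : Tendsto d atTop (𝓝 (η/2)) := by
    have hden : Tendsto (fun l => Real.sqrt (ε (l+1)/ε l) * (1 + Real.sqrt (ε (l+1)/ε l)))
        atTop (𝓝 2) := by
      have h := hsρ.mul ((tendsto_const_nhds (x := (1:ℝ))).add hsρ)
      norm_num at h
      exact h
    have h := hrlim.div hden (by norm_num)
    apply Tendsto.congr _ h
    intro l
    have ha : 0 < Real.sqrt (ε l) := Real.sqrt_pos.2 (hεpos l)
    have hb : 0 < Real.sqrt (ε (l+1)) := Real.sqrt_pos.2 (hεpos (l+1))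
    have hab : Real.sqrt (ε l)^2 - Real.sqrt (ε (l+1))^2
        = r l * (Real.sqrt (ε l)^2 * Real.sqrt (ε l)) := by
      rw [Real.sq_sqrt (hεpos l).le, Real.sq_sqrt (hεpos (l+1)).le]
      exact hkey l
    have hdiv : Real.sqrt (ε (l+1) / ε l) = Real.sqrt (ε (l+1)) / Real.sqrt (ε l) :=
      Real.sqrt_div (hεpos (l+1)).le _
    simp only [Pi.div_apply, hd, hu, hdiv]
    exact (hID _ _ _ ha hb hab).symm
  have hsum : ∀ n, u n = u 0 + ∑ i ∈ Finset.range n, d i := by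
    intro n
    simp only [hd, Finset.sum_range_sub (f := u)]
    ring
  have hun : Tendsto (fun n : ℕ => u n / n) atTop (𝓝 (η/2)) := by
    have h0 : Tendsto (fun n : ℕ => u 0 * (n:ℝ)⁻¹) atTop (𝓝 0) := by
      simpa using tendsto_const_nhds.mul (tendsto_inv_atTop_nhds_zero_nat (𝕜 := ℝ))
    have h := h0.add hdlim.cesaro
    rw [zero_add] at h
    apply Tendsto.congr _ h
    intro n
    rw [hsum n, div_eq_mul_inv]
    ring
  have hinv : Tendsto (fun n : ℕ => ((u n / n)⁻¹)^2) atTop (𝓝 ((2/η)^2)) := by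
    have h := (hun.inv₀ (by positivity)).pow 2
    rwa [show (η/2)⁻¹ = 2/η by rw [inv_div]] at h
  have hfinal : Tendsto (fun l : ℕ => (1 - c l) * (l : ℝ) ^ 2) atTop (𝓝 ((2/η)^2)) := by
    apply Tendsto.congr _ hinv
    intro n
    have hep := hεpos n
    have hu2 : u n ^ 2 = (ε n)⁻¹ := by
      simp only [hu, one_div, ← Real.sqrt_inv]
      exact Real.sq_sqrt (by positivity)
    rw [inv_div, div_pow, hu2, division_def, inv_inv]
    simp only [hε]
    ring
  have : (2/η)^2 = 4 / (lam * (2 * Real.sqrt 2 / (3 * π)) / (1 + lam)) ^ 2 := by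
    rw [hη, hβ, div_pow]
    norm_num
  rwa [this] at hfinal
end
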